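/- arXiv:1401.6824 — 7 statements merged into one kernel-verified Lean document; each statement's English description precedes it below -/
import Mathlib

section
/- If $f\in C^2[0,1]$, then for all $x\in[0,1]$ and $n\ge 1$, $|f(x)-B_n(f)(x)|\le \frac{x(1-x)}{2n}\|f''\|_\infty$, where $\|\cdot\|_\infty$ is the sup norm on $[0,1]$. -/
/-- Bernstein polynomial of a function `f : ℝ → ℝ`. -/
noncomputable def bern (n : ℕ) (f : ℝ → ℝ) (x : ℝ) : ℝ :=
  ∑ k ∈ Finset.range (n + 1), (n.choose k : ℝ) * x ^ k * (1 - x) ^ (n - k) * f (k / n)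

section Aux
open Set intervalIntegral


lemma taylor_bound (f : ℝ → ℝ) (hf : ContDiffOn ℝ 2 f (Icc (0:ℝ) 1)) (M : ℝ)
    (hM : ∀ y ∈ Icc (0:ℝ) 1, |derivWithin (derivWithin f (Icc (0:ℝ) 1)) (Icc (0:ℝ) 1) y| ≤ M)
    (a b : ℝ) (ha : a ∈ Icc (0:ℝ) 1) (hb : b ∈ Icc (0:ℝ) 1) :
    |f b - f a - derivWithin f (Icc (0:ℝ) 1) a * (b - a)| ≤ M / 2 * (b - a) ^ 2 := by
  set s : Set ℝ := Icc (0:ℝ) 1 with hs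
  set f' := derivWithin f s with hf'def
  have hUD : UniqueDiffOn ℝ s := uniqueDiffOn_Icc zero_lt_one
  have hf1 : ContDiffOn ℝ 1 f' s := hf.derivWithin hUD (by norm_num)
  have hf'd : DifferentiableOn ℝ f' s := hf1.differentiableOn one_ne_zero
  have hfd : DifferentiableOn ℝ f s := hf.differentiableOn (by norm_num)
  have hf'c : ContinuousOn f' s := hf1.continuousOn
  have lip : ∀ t ∈ s, |f' t - f' a| ≤ M * |t - a| := by
    intro t ht
    exact (convex_Icc 0 1).norm_image_sub_le_of_norm_derivWithin_le hf'd hM ha ht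
  have hsub : ∀ u v : ℝ, u ∈ s → v ∈ s → Icc u v ⊆ s := fun u v hu hv =>
    Icc_subset_Icc hu.1 hv.2
  have ftc : ∀ u v : ℝ, u ∈ s → v ∈ s → u ≤ v → ∫ t in u..v, f' t = f v - f u := by
    intro u v hu hv huv
    apply integral_eq_sub_of_hasDeriv_right_of_le huv
    · exact hfd.continuousOn.mono (hsub u v hu hv)
    · intro t ht
      have ht' : t ∈ Ioo (0:ℝ) 1 := ⟨lt_of_le_of_lt hu.1 ht.1, lt_of_lt_of_le ht.2 hv.2⟩
      have hmem : s ∈ nhds t := Icc_mem_nhds ht'.1 ht'.2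
      have hdiff : DifferentiableAt ℝ f t :=
        (hfd t (Ioo_subset_Icc_self ht')).differentiableAt hmem
      have hd : f' t = deriv f t := derivWithin_of_mem_nhds hmem
      rw [hd]
      exact hdiff.hasDerivAt.hasDerivWithinAt
    · exact (hf'c.mono (hsub u v hu hv)).intervalIntegrable_of_Icc huv
  have hM0 : 0 ≤ M := le_trans (abs_nonneg _) (hM 0 ⟨le_refl 0, zero_le_one⟩)
  have i0 : ∀ u v : ℝ, u ∈ s → v ∈ s →
      IntervalIntegrable f' MeasureTheory.volume u v := by
    intro u v hu hv
    rcases le_total u v with h | h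
    · exact (hf'c.mono (hsub u v hu hv)).intervalIntegrable_of_Icc h
    · exact ((hf'c.mono (hsub v u hv hu)).intervalIntegrable_of_Icc h).symm
  have i1 : ∀ u v : ℝ, u ∈ s → v ∈ s →
      IntervalIntegrable (fun t => f' t - f' a) MeasureTheory.volume u v :=
    fun u v hu hv => (i0 u v hu hv).sub intervalIntegrable_const
  have key : ∀ u v : ℝ, u ∈ s → v ∈ s → u ≤ v →
      ∫ t in u..v, (f' t - f' a) = (f v - f u) - f' a * (v - u) := by
    intro u v hu hv huv
    rw [intervalIntegral.integral_sub (i0 u v hu hv) intervalIntegrable_const,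
      ftc u v hu hv huv, intervalIntegral.integral_const]
    simp [smul_eq_mul]; ring
  rcases le_total a b with hab | hab
  · have eq1 : f b - f a - f' a * (b - a) = ∫ t in a..b, (f' t - f' a) :=
      (key a b ha hb hab).symm
    rw [eq1]
    calc |∫ t in a..b, (f' t - f' a)| ≤ ∫ t in a..b, |f' t - f' a| := by
          simpa [Real.norm_eq_abs] using
            intervalIntegral.norm_integral_le_integral_norm (f := fun t => f' t - f' a) hab
      _ ≤ ∫ t in a..b, M * (t - a) := by
          apply intervalIntegral.integral_mono_on hab
          · exact (i1 a b ha hb).abs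
          · exact (continuous_const.mul (continuous_id.sub continuous_const)).intervalIntegrable a b
          · intro t ht
            have hts : t ∈ s := hsub a b ha hb ht
            calc |f' t - f' a| ≤ M * |t - a| := lip t hts
              _ = M * (t - a) := by rw [abs_of_nonneg (by linarith [ht.1])]
      _ = M / 2 * (b - a) ^ 2 := by
          rw [intervalIntegral.integral_const_mul]
          rw [intervalIntegral.integral_sub (intervalIntegral.intervalIntegrable_id)
            intervalIntegrable_const, integral_id, intervalIntegral.integral_const]
          simp [smul_eq_mul]; ring
  · have eq1 : f b - f a - f' a * (b - a) = -(∫ t in b..a, (f' t - f' a)) := by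
      rw [key b a hb ha hab]; ring
    rw [eq1, abs_neg]
    calc |∫ t in b..a, (f' t - f' a)| ≤ ∫ t in b..a, |f' t - f' a| := by
          simpa [Real.norm_eq_abs] using
            intervalIntegral.norm_integral_le_integral_norm (f := fun t => f' t - f' a) hab
      _ ≤ ∫ t in b..a, M * (a - t) := by
          apply intervalIntegral.integral_mono_on hab
          · exact (i1 b a hb ha).abs
          · exact (continuous_const.mul (continuous_const.sub continuous_id)).intervalIntegrable b a
          · intro t ht
            have hts : t ∈ s := hsub b a hb ha ht
            calc |f' t - f' a| ≤ M * |t - a| := lip t hts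
              _ = M * (a - t) := by rw [abs_sub_comm, abs_of_nonneg (by linarith [ht.2])]
      _ = M / 2 * (b - a) ^ 2 := by
          rw [intervalIntegral.integral_const_mul]
          rw [intervalIntegral.integral_sub intervalIntegrable_const
            (intervalIntegral.intervalIntegrable_id), integral_id, intervalIntegral.integral_const]
          simp [smul_eq_mul]; ring


lemma bernS0 (n : ℕ) (x : ℝ) :
    (∑ k ∈ Finset.range (n+1), (n.choose k : ℝ) * x ^ k * (1 - x) ^ (n - k)) = 1 := by
  have h := add_pow x (1 - x) n
  simp only [add_sub_cancel, one_pow] at h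
  calc (∑ k ∈ Finset.range (n+1), (n.choose k : ℝ) * x ^ k * (1 - x) ^ (n - k))
      = ∑ k ∈ Finset.range (n+1), x ^ k * (1 - x) ^ (n - k) * (n.choose k : ℝ) :=
        Finset.sum_congr rfl fun k _ => by ring
    _ = 1 := h.symm

lemma bernS1 (n : ℕ) (x : ℝ) :
    (∑ k ∈ Finset.range (n+1), (k : ℝ) * ((n.choose k : ℝ) * x ^ k * (1 - x) ^ (n - k))) = n * x := by
  have h := bernsteinPolynomial.sum_smul ℝ n
  apply_fun fun p => Polynomial.aeval x p at h
  simp only [map_sum, nsmul_eq_mul, map_mul, map_natCast, Polynomial.coe_aeval_eq_eval,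
    bernsteinPolynomial, Polynomial.eval_mul, Polynomial.eval_pow, Polynomial.eval_natCast,
    Polynomial.eval_sub, Polynomial.eval_one, Polynomial.eval_X] at h
  exact h

lemma bernS2 (n : ℕ) (hn : 1 ≤ n) (x : ℝ) (hx : x ∈ Set.Icc (0:ℝ) 1) :
    (∑ k ∈ Finset.range (n+1),
      ((n.choose k : ℝ) * x ^ k * (1 - x) ^ (n - k)) * ((k : ℝ)/n - x) ^ 2)
      = x * (1 - x) / n := by
  have hn' : (0:ℝ) < n := by exact_mod_cast hn
  have hv := bernstein.variance (n := n) (by omega) ⟨x, hx⟩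
  rw [← hv, ← Fin.sum_univ_eq_sum_range
    (fun k => (n.choose k : ℝ) * x ^ k * (1 - x) ^ (n - k) * ((k : ℝ)/n - x) ^ 2)]
  apply Finset.sum_congr rfl
  intro k _
  simp only [bernstein_apply, bernstein.z]
  ring

end Aux

open Set in
theorem bernstein_second_order_estimate (f : ℝ → ℝ)
    (hf : ContDiffOn ℝ 2 f (Set.Icc (0 : ℝ) 1))
    (n : ℕ) (hn : 1 ≤ n) (x : ℝ) (hx : x ∈ Set.Icc (0 : ℝ) 1) :
    |f x - bern n f x| ≤ x * (1 - x) / (2 * n) *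
      ⨆ y : Set.Icc (0 : ℝ) 1,
        |derivWithin (derivWithin f (Set.Icc (0 : ℝ) 1)) (Set.Icc (0 : ℝ) 1) y| := by
  set s : Set ℝ := Set.Icc (0:ℝ) 1 with hs
  set f' := derivWithin f s with hf'def
  set f'' := derivWithin f' s with hf''def
  set M : ℝ := ⨆ y : s, |f'' y| with hMdef
  set w : ℕ → ℝ := fun k => (n.choose k : ℝ) * x ^ k * (1 - x) ^ (n - k) with hwdef
  have hn' : (0:ℝ) < n := by exact_mod_cast hn
  have hUD : UniqueDiffOn ℝ s := uniqueDiffOn_Icc zero_lt_one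
  have hf''c : ContinuousOn f'' s := by
    have h1 : ContDiffOn ℝ 1 f' s := hf.derivWithin hUD (by norm_num)
    have h0 : ContDiffOn ℝ 0 f'' s := h1.derivWithin hUD (by norm_num)
    exact h0.continuousOn
  have hbdd : BddAbove (Set.range fun y : s => |f'' ↑y|) := by
    have := (isCompact_Icc.image_of_continuousOn hf''c.abs).bddAbove
    rwa [Set.image_eq_range] at this
  have hM : ∀ y ∈ s, |f'' y| ≤ M := fun y hy => le_ciSup hbdd ⟨y, hy⟩
  have hM0 : 0 ≤ M := le_trans (abs_nonneg _) (hM 0 ⟨le_refl 0, zero_le_one⟩)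
  have hx0 : (0:ℝ) ≤ x := hx.1
  have hx1 : x ≤ 1 := hx.2
  have hw0 : ∀ k, 0 ≤ w k := by
    intro k
    have h1 : (0:ℝ) ≤ 1 - x := by linarith
    positivity
  have hk1 : ∀ k ∈ Finset.range (n+1), ((k:ℝ)/n) ∈ s := by
    intro k hk
    have hkn : (k:ℝ) ≤ n := by
      have := Finset.mem_range.mp hk; exact_mod_cast Nat.lt_succ_iff.mp this
    constructor
    · positivity
    · rw [div_le_one hn']; exact hkn
  have hd : ∑ k ∈ Finset.range (n+1), w k * ((k:ℝ)/n - x) = 0 := by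
    calc ∑ k ∈ Finset.range (n+1), w k * ((k:ℝ)/n - x)
        = ∑ k ∈ Finset.range (n+1), ((k:ℝ) * w k / n - w k * x) :=
          Finset.sum_congr rfl fun k _ => by ring
      _ = (∑ k ∈ Finset.range (n+1), (k:ℝ) * w k) / n
            - (∑ k ∈ Finset.range (n+1), w k) * x := by
          rw [Finset.sum_sub_distrib, Finset.sum_div, Finset.sum_mul]
      _ = ((n:ℝ) * x) / n - 1 * x := by rw [bernS1, bernS0]
      _ = 0 := by field_simp; ring
  have key : f x - bern n f x
      = -∑ k ∈ Finset.range (n+1), w k * (f ((k:ℝ)/n) - f x - f' x * ((k:ℝ)/n - x)) := by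
    have expand : ∑ k ∈ Finset.range (n+1), w k * (f ((k:ℝ)/n) - f x - f' x * ((k:ℝ)/n - x))
        = (∑ k ∈ Finset.range (n+1), w k * f ((k:ℝ)/n))
          - (∑ k ∈ Finset.range (n+1), w k) * f x
          - f' x * ∑ k ∈ Finset.range (n+1), w k * ((k:ℝ)/n - x) := by
      rw [Finset.sum_mul, Finset.mul_sum, ← Finset.sum_sub_distrib, ← Finset.sum_sub_distrib]
      exact Finset.sum_congr rfl fun k _ => by ring
    rw [expand, bernS0, hd]
    have hb : bern n f x = ∑ k ∈ Finset.range (n+1), w k * f ((k:ℝ)/n) := rfl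
    rw [hb]; ring
  rw [key, abs_neg]
  calc |∑ k ∈ Finset.range (n+1), w k * (f ((k:ℝ)/n) - f x - f' x * ((k:ℝ)/n - x))|
      ≤ ∑ k ∈ Finset.range (n+1), |w k * (f ((k:ℝ)/n) - f x - f' x * ((k:ℝ)/n - x))| :=
        Finset.abs_sum_le_sum_abs _ _
    _ ≤ ∑ k ∈ Finset.range (n+1), w k * (M / 2 * ((k:ℝ)/n - x) ^ 2) := by
        apply Finset.sum_le_sum
        intro k hk
        rw [abs_mul, abs_of_nonneg (hw0 k)]
        exact mul_le_mul_of_nonneg_left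
          (taylor_bound f hf M hM x ((k:ℝ)/n) hx (hk1 k hk)) (hw0 k)
    _ = M / 2 * ∑ k ∈ Finset.range (n+1), w k * (((k:ℝ)/n - x) ^ 2) := by
        rw [Finset.mul_sum]; exact Finset.sum_congr rfl fun k _ => by ring
    _ = M / 2 * (x * (1 - x) / n) := by rw [bernS2 n hn x hx]
    _ = x * (1 - x) / (2 * n) * M := by field_simp
end

section
/- Let $B_n(f)(z)=\sum_{k=0}^n \binom{n}{k}z^k(1-z)^{n-k}f(k/n)$ be the complex Bernstein polynomial. For every $r\ge 1$, all $|z|\le r$, and all $n,k\in\mathbb{N}$, one has $|B_n(e_k)(z)|\le r^k$, where $e_k(z)=z^k$. -/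
open Complex

/-- Complex Bernstein polynomial of a function `f : ℂ → ℂ`. -/
noncomputable def bernC (n : ℕ) (f : ℂ → ℂ) (z : ℂ) : ℂ :=
  ∑ k ∈ Finset.range (n + 1), (n.choose k : ℂ) * z ^ k * (1 - z) ^ (n - k) * f ((k : ℂ) / n)

open Finset in
/-- Auxiliary: binomial-type identity over powersets. -/
lemma bernC_aux_sum_powerset_pow {α : Type*} [DecidableEq α] (A : Finset α) (x y : ℂ) :
    ∑ t ∈ A.powerset, x ^ t.card * y ^ (A.card - t.card) = (x + y) ^ A.card := by
  have h := Finset.prod_add (fun _ : α => x) (fun _ : α => y) A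
  simp only [prod_const] at h
  rw [h]
  exact sum_congr rfl fun t ht => by rw [card_sdiff_of_subset (mem_powerset.mp ht)]

open Finset in
/-- Auxiliary: sum over supersets of `T`. -/
lemma bernC_aux_sum_supersets {n : ℕ} (T : Finset (Fin n)) (z : ℂ) :
    ∑ S ∈ univ.powerset.filter (fun S => T ⊆ S), z ^ S.card * (1 - z) ^ (n - S.card)
      = z ^ T.card := by
  have hbij : ∑ S ∈ univ.powerset.filter (fun S => T ⊆ S),
      z ^ S.card * (1 - z) ^ (n - S.card)
      = ∑ S' ∈ (univ \ T).powerset, z ^ (T.card + S'.card) * (1 - z) ^ (n - (T.card + S'.card)) := by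
    apply Finset.sum_nbij' (fun S => S \ T) (fun S' => T ∪ S')
    · intro S hS
      simp only [mem_filter, mem_powerset] at hS
      exact mem_powerset.mpr (sdiff_subset_sdiff hS.1 (Finset.Subset.refl T))
    · intro S' hS'
      simp only [mem_powerset] at hS'
      refine mem_filter.mpr ⟨mem_powerset.mpr (subset_univ _), subset_union_left⟩
    · intro S hS
      simp only [mem_filter, mem_powerset] at hS
      exact (union_sdiff_of_subset hS.2).symm ▸ union_sdiff_of_subset hS.2
    · intro S' hS'
      simp only [mem_powerset] at hS'
      have : Disjoint T S' := disjoint_of_subset_right hS' disjoint_sdiff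
      rw [union_sdiff_cancel_left this]
    · intro S hS
      simp only [mem_filter, mem_powerset] at hS
      have hc : (S \ T).card = S.card - T.card := card_sdiff_of_subset hS.2
      have hTS : T.card ≤ S.card := card_le_card hS.2
      rw [hc, Nat.add_sub_cancel' hTS]
  rw [hbij]
  have hA : (univ \ T : Finset (Fin n)).card = n - T.card := by
    rw [card_sdiff_of_subset (subset_univ T), card_fin]
  calc ∑ S' ∈ (univ \ T).powerset, z ^ (T.card + S'.card) * (1 - z) ^ (n - (T.card + S'.card))
      = z ^ T.card * ∑ S' ∈ (univ \ T).powerset,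
          z ^ S'.card * (1 - z) ^ ((univ \ T : Finset (Fin n)).card - S'.card) := by
        rw [mul_sum]
        refine sum_congr rfl fun S' hS' => ?_
        rw [pow_add, hA, Nat.sub_add_eq, mul_assoc]
    _ = z ^ T.card := by
        rw [bernC_aux_sum_powerset_pow, add_sub_cancel, one_pow, mul_one]

open Finset in
/-- Auxiliary: the key combinatorial identity. -/
lemma bernC_aux_key (n k : ℕ) (z : ℂ) :
    ∑ j ∈ range (n + 1), (n.choose j : ℂ) * z ^ j * (1 - z) ^ (n - j) * (j : ℂ) ^ k
      = ∑ g : Fin k → Fin n, z ^ (Finset.image g univ).card := by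
  classical
  have stepA : ∑ j ∈ range (n + 1), (n.choose j : ℂ) * z ^ j * (1 - z) ^ (n - j) * (j : ℂ) ^ k
      = ∑ S ∈ (univ : Finset (Fin n)).powerset,
          z ^ S.card * (1 - z) ^ (n - S.card) * (S.card : ℂ) ^ k := by
    rw [sum_powerset_apply_card (fun c => z ^ c * (1 - z) ^ (n - c) * (c : ℂ) ^ k), card_fin]
    refine sum_congr rfl fun j hj => ?_
    rw [nsmul_eq_mul]
    ring
  have stepB : ∀ S : Finset (Fin n), ((S.card : ℂ)) ^ k
      = ∑ g ∈ Fintype.piFinset (fun _ : Fin k => S), (1 : ℂ) := by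
    intro S
    rw [sum_const, Fintype.card_piFinset]
    simp [mul_comm]
  rw [stepA]
  have stepC : ∑ S ∈ (univ : Finset (Fin n)).powerset,
      z ^ S.card * (1 - z) ^ (n - S.card) * (S.card : ℂ) ^ k
      = ∑ g : Fin k → Fin n, ∑ S ∈ univ.powerset.filter (fun S => Finset.image g univ ⊆ S),
          z ^ S.card * (1 - z) ^ (n - S.card) := by
    have h1 : ∀ S : Finset (Fin n),
        z ^ S.card * (1 - z) ^ (n - S.card) * (S.card : ℂ) ^ k
        = ∑ g ∈ (univ : Finset (Fin k → Fin n)),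
            if Finset.image g univ ⊆ S then z ^ S.card * (1 - z) ^ (n - S.card) else 0 := by
      intro S
      rw [stepB, mul_sum, mul_one]
      rw [← Finset.sum_filter]
      apply Finset.sum_congr
      · ext g
        simp [Fintype.mem_piFinset, Finset.image_subset_iff]
      · intros; rfl
    simp_rw [h1]
    rw [Finset.sum_comm]
    refine sum_congr rfl fun g _ => ?_
    rw [Finset.sum_filter]
  rw [stepC]
  exact sum_congr rfl fun g _ => bernC_aux_sum_supersets _ z

open Finset in
theorem bernsteinC_monomial_bound (r : ℝ) (hr : 1 ≤ r) (n k : ℕ)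
    (z : ℂ) (hz : ‖z‖ ≤ r) :
    ‖bernC n (fun w => w ^ k) z‖ ≤ r ^ k := by
  have hr0 : (0:ℝ) ≤ r := le_trans zero_le_one hr
  rcases Nat.eq_zero_or_pos n with hn | hn
  · subst hn
    have hb : bernC 0 (fun w => w ^ k) z = (0:ℂ) ^ k := by
      simp [bernC]
    rw [hb, norm_pow, norm_zero]
    calc (0:ℝ) ^ k ≤ 1 := pow_le_one₀ le_rfl zero_le_one
      _ ≤ r ^ k := one_le_pow₀ hr
  · have hnC : ((n:ℂ)) ≠ 0 := Nat.cast_ne_zero.mpr hn.ne'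
    have hmain : (n:ℂ) ^ k * bernC n (fun w => w ^ k) z
        = ∑ g : Fin k → Fin n, z ^ (Finset.image g univ).card := by
      rw [← bernC_aux_key n k z, bernC, mul_sum]
      refine sum_congr rfl fun j _ => ?_
      rw [div_pow]
      field_simp
    have hnorm : (n:ℝ) ^ k * ‖bernC n (fun w => w ^ k) z‖
        = ‖∑ g : Fin k → Fin n, z ^ (Finset.image g univ).card‖ := by
      rw [← hmain, norm_mul, norm_pow, Complex.norm_natCast]
    have hbound : ‖∑ g : Fin k → Fin n, z ^ (Finset.image g univ).card‖
        ≤ (n:ℝ) ^ k * r ^ k := by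
      calc ‖∑ g : Fin k → Fin n, z ^ (Finset.image g univ).card‖
          ≤ ∑ g : Fin k → Fin n, ‖z ^ (Finset.image g univ).card‖ := norm_sum_le _ _
        _ ≤ ∑ _g : Fin k → Fin n, r ^ k := by
            refine sum_le_sum fun g _ => ?_
            rw [norm_pow]
            calc ‖z‖ ^ (Finset.image g univ).card
                ≤ r ^ (Finset.image g univ).card :=
                  pow_le_pow_left₀ (norm_nonneg z) hz _
              _ ≤ r ^ k := pow_le_pow_right₀ hr
                  (le_trans (card_image_le) (by simp))
        _ = (n:ℝ) ^ k * r ^ k := by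
            rw [sum_const, card_univ, nsmul_eq_mul]
            simp [Fintype.card_fun]
    have hnk : (0:ℝ) < (n:ℝ) ^ k := pow_pos (by exact_mod_cast hn) k
    have := hnorm ▸ hbound
    exact le_of_mul_le_mul_left this hnk
end

section
/- For the complex Bernstein polynomials, for every $r\ge 1$, all $|z|\le r$, and all $n,k\in\mathbb{N}$, one has $|B_n(e_k)(z)-z^k|\le \frac{3r(1+r)}{2n}k(k-1)r^{k-2}$, where $e_k(z)=z^k$. -/
open Complex


/-- Stirling numbers of the second kind. -/
def stir : ℕ → ℕ → ℕ
  | 0, 0 => 1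
  | 0, _ + 1 => 0
  | _ + 1, 0 => 0
  | k + 1, j + 1 => (j + 1) * stir k (j + 1) + stir k j

lemma stir_eq_zero : ∀ k j : ℕ, k < j → stir k j = 0
  | 0, _ + 1, _ => rfl
  | k + 1, j + 1, h => by
    show (j + 1) * stir k (j + 1) + stir k j = 0
    rw [stir_eq_zero k (j + 1) (by omega), stir_eq_zero k j (by omega)]
    simp

lemma stir_self : ∀ k : ℕ, stir k k = 1
  | 0 => rfl
  | k + 1 => by
    show (k + 1) * stir k (k + 1) + stir k k = 1
    rw [stir_eq_zero k (k + 1) (by omega), stir_self k]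
    simp

lemma mul_descFactorial (m j : ℕ) :
    m * m.descFactorial j = m.descFactorial (j + 1) + j * m.descFactorial j := by
  rcases le_or_gt j m with h | h
  · rw [Nat.descFactorial_succ]
    zify [h]
    ring
  · rw [Nat.descFactorial_of_lt h, Nat.descFactorial_of_lt (by omega)]
    simp

lemma pow_eq_sum_stir (m : ℕ) :
    ∀ k : ℕ, m ^ k = ∑ j ∈ Finset.range (k + 1), stir k j * m.descFactorial j
  | 0 => by simp [stir]
  | k + 1 => by
    have hshift : ∑ j ∈ Finset.range (k + 1), j * (stir k j * m.descFactorial j)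
        = ∑ j ∈ Finset.range (k + 1), (j + 1) * (stir k (j + 1) * m.descFactorial (j + 1)) := by
      calc ∑ j ∈ Finset.range (k + 1), j * (stir k j * m.descFactorial j)
          = ∑ j ∈ Finset.range (k + 2), j * (stir k j * m.descFactorial j) := by
            conv_rhs => rw [Finset.sum_range_succ]
            rw [stir_eq_zero k (k + 1) k.lt_succ_self]; simp
        _ = (∑ j ∈ Finset.range (k + 1), (j + 1) * (stir k (j + 1) * m.descFactorial (j + 1)))
              + 0 * (stir k 0 * m.descFactorial 0) :=
            Finset.sum_range_succ' _ (k + 1)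
        _ = _ := by simp
    calc m ^ (k + 1) = (∑ j ∈ Finset.range (k + 1), stir k j * m.descFactorial j) * m := by
          rw [← pow_eq_sum_stir m k, pow_succ]
      _ = ∑ j ∈ Finset.range (k + 1),
            (stir k j * m.descFactorial (j + 1) + j * (stir k j * m.descFactorial j)) := by
          rw [Finset.sum_mul]
          refine Finset.sum_congr rfl fun j _ => ?_
          rw [Nat.mul_assoc, Nat.mul_comm (m.descFactorial j) m, mul_descFactorial]
          ring
      _ = (∑ j ∈ Finset.range (k + 1), stir k j * m.descFactorial (j + 1))
            + ∑ j ∈ Finset.range (k + 1), j * (stir k j * m.descFactorial j) :=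
          Finset.sum_add_distrib
      _ = ∑ j ∈ Finset.range (k + 1),
            ((j + 1) * stir k (j + 1) + stir k j) * m.descFactorial (j + 1) := by
          rw [hshift, ← Finset.sum_add_distrib]
          refine Finset.sum_congr rfl fun j _ => ?_
          ring
      _ = ∑ j ∈ Finset.range (k + 2), stir (k + 1) j * m.descFactorial j := by
          rw [Finset.sum_range_succ' (fun j => stir (k + 1) j * m.descFactorial j) (k + 1)]
          simp [stir]

lemma choose_mul_descFactorial {n m j : ℕ} (hjm : j ≤ m) (hmn : m ≤ n) :
    n.choose m * m.descFactorial j = n.descFactorial j * (n - j).choose (m - j) := by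
  calc n.choose m * m.descFactorial j = Nat.factorial j * (n.choose m * m.choose j) := by
        rw [Nat.descFactorial_eq_factorial_mul_choose]; ring
    _ = Nat.factorial j * (n.choose j * (n - j).choose (m - j)) := by rw [Nat.choose_mul hjm]
    _ = n.descFactorial j * (n - j).choose (m - j) := by
        rw [Nat.descFactorial_eq_factorial_mul_choose]; ring

lemma sum_bern_descFactorial (n j : ℕ) (z : ℂ) :
    ∑ m ∈ Finset.range (n + 1),
      (n.choose m : ℂ) * z ^ m * (1 - z) ^ (n - m) * (m.descFactorial j : ℂ)
      = (n.descFactorial j : ℂ) * z ^ j := by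
  rcases le_or_gt j n with hjn | hjn
  · have hsub : Finset.Ico j (n + 1) ⊆ Finset.range (n + 1) := by
      rw [Finset.range_eq_Ico]
      exact Finset.Ico_subset_Ico (Nat.zero_le j) le_rfl
    have hvan : ∀ m ∈ Finset.range (n + 1), m ∉ Finset.Ico j (n + 1) →
        (n.choose m : ℂ) * z ^ m * (1 - z) ^ (n - m) * (m.descFactorial j : ℂ) = 0 := by
      intro m hm hm'
      have hmlt : m < j := by
        simp only [Finset.mem_range] at hm
        simp only [Finset.mem_Ico, not_and, not_lt] at hm'
        by_contra hc
        exact absurd (hm' (by omega)) (by omega)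
      rw [Nat.descFactorial_of_lt hmlt]
      simp
    have hbin : ∑ i ∈ Finset.range (n - j + 1),
        z ^ i * (1 - z) ^ (n - j - i) * ((n - j).choose i : ℂ) = 1 := by
      have h := add_pow z (1 - z) (n - j)
      have h1 : z + (1 - z) = 1 := by ring
      rw [h1, one_pow] at h
      exact h.symm
    calc ∑ m ∈ Finset.range (n + 1),
          (n.choose m : ℂ) * z ^ m * (1 - z) ^ (n - m) * (m.descFactorial j : ℂ)
        = ∑ m ∈ Finset.Ico j (n + 1),
          (n.choose m : ℂ) * z ^ m * (1 - z) ^ (n - m) * (m.descFactorial j : ℂ) :=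
          (Finset.sum_subset hsub hvan).symm
      _ = ∑ i ∈ Finset.range (n + 1 - j),
          (n.choose (j + i) : ℂ) * z ^ (j + i) * (1 - z) ^ (n - (j + i))
            * ((j + i).descFactorial j : ℂ) := Finset.sum_Ico_eq_sum_range _ _ _
      _ = ∑ i ∈ Finset.range (n - j + 1),
          (n.descFactorial j : ℂ) * z ^ j * (z ^ i * (1 - z) ^ (n - j - i) * ((n - j).choose i : ℂ)) := by
          rw [show n + 1 - j = n - j + 1 by omega]
          refine Finset.sum_congr rfl fun i hi => ?_
          have hi' : i ≤ n - j := by simpa [Nat.lt_succ_iff] using hi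
          have hkey : n.choose (j + i) * (j + i).descFactorial j
              = n.descFactorial j * (n - j).choose i := by
            have := choose_mul_descFactorial (Nat.le_add_right j i) (by omega : j + i ≤ n)
            simpa using this
          have hkeyC : (n.choose (j + i) : ℂ) * ((j + i).descFactorial j : ℂ)
              = (n.descFactorial j : ℂ) * ((n - j).choose i : ℂ) := by exact_mod_cast hkey
          rw [pow_add, show n - (j + i) = n - j - i by omega]
          linear_combination (z ^ j * z ^ i * (1 - z) ^ (n - j - i)) * hkeyC
      _ = (n.descFactorial j : ℂ) * z ^ j * ∑ i ∈ Finset.range (n - j + 1),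
            z ^ i * (1 - z) ^ (n - j - i) * ((n - j).choose i : ℂ) := by
          rw [Finset.mul_sum]
      _ = (n.descFactorial j : ℂ) * z ^ j := by rw [hbin, mul_one]
  · have h1 : n.descFactorial j = 0 := Nat.descFactorial_of_lt hjn
    rw [h1]
    rw [Finset.sum_eq_zero]
    · simp
    · intro m hm
      simp only [Finset.mem_range] at hm
      rw [Nat.descFactorial_of_lt (by omega)]
      simp

lemma descFactorial_sub_id (n k : ℕ) :
    n ^ (k + 1) - n.descFactorial (k + 1) =
      n * (n ^ k - n.descFactorial k) + k * n.descFactorial k := by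
  rcases lt_or_ge n k with h | h
  · rw [Nat.descFactorial_of_lt h, Nat.descFactorial_of_lt (by omega)]
    simp [pow_succ, Nat.mul_comm]
  · have h1 : n.descFactorial k ≤ n ^ k := Nat.descFactorial_le_pow n k
    rw [Nat.descFactorial_succ, pow_succ]
    have h4 : (n - k) * n.descFactorial k ≤ n ^ k * n := by
      calc (n - k) * n.descFactorial k ≤ n * n ^ k := Nat.mul_le_mul (Nat.sub_le n k) h1
        _ = n ^ k * n := Nat.mul_comm _ _
    zify [h, h1, h4]
    ring

lemma pow_sub_descFactorial_le (n : ℕ) :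
    ∀ k : ℕ, 2 * (n : ℝ) * ((n ^ k - n.descFactorial k : ℕ) : ℝ)
      ≤ ((k * (k - 1) : ℕ) : ℝ) * (n : ℝ) ^ k
  | 0 => by simp
  | k + 1 => by
    have ih := pow_sub_descFactorial_le n k
    have hcoef : (k + 1) * ((k + 1) - 1) = k * (k - 1) + 2 * k := by
      cases k with
      | zero => rfl
      | succ s => simp [Nat.succ_sub_one]; ring
    rw [descFactorial_sub_id, hcoef]
    have hd : (n.descFactorial k : ℝ) ≤ (n : ℝ) ^ k := by
      exact_mod_cast Nat.descFactorial_le_pow n k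
    have hn0 : (0 : ℝ) ≤ n := Nat.cast_nonneg n
    have hpk : (0 : ℝ) ≤ (n : ℝ) ^ k := pow_nonneg hn0 k
    have h1 : (n : ℝ) * (2 * (n : ℝ) * ((n ^ k - n.descFactorial k : ℕ) : ℝ))
        ≤ (n : ℝ) * (((k * (k - 1) : ℕ) : ℝ) * (n : ℝ) ^ k) :=
      mul_le_mul_of_nonneg_left ih hn0
    have h2 : (2 * (k : ℝ) * (n : ℝ)) * (n.descFactorial k : ℝ)
        ≤ (2 * (k : ℝ) * (n : ℝ)) * (n : ℝ) ^ k :=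
      mul_le_mul_of_nonneg_left hd (by positivity)
    push_cast
    push_cast at h1 h2
    rw [pow_succ]
    nlinarith [h1, h2]

theorem bernsteinC_monomial_approx (r : ℝ) (hr : 1 ≤ r) (n k : ℕ) (hn : 1 ≤ n)
    (z : ℂ) (hz : ‖z‖ ≤ r) :
    ‖bernC n (fun w => w ^ k) z - z ^ k‖ ≤
      3 * r * (1 + r) / (2 * n) * ((k : ℝ) * ((k : ℝ) - 1)) * r ^ (k - 2) := by
  have hr0 : (0 : ℝ) < r := lt_of_lt_of_le one_pos hr
  have hn0 : (0 : ℝ) < (n : ℝ) := by exact_mod_cast hn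
  have hnC : (n : ℂ) ≠ 0 := by
    exact_mod_cast (by omega : n ≠ 0)
  -- Step A: closed form for the Bernstein polynomial of a monomial
  have hA : bernC n (fun w => w ^ k) z
      = (∑ j ∈ Finset.range (k + 1),
          (stir k j : ℂ) * ((n.descFactorial j : ℂ) * z ^ j)) / (n : ℂ) ^ k := by
    unfold bernC
    have hterm : ∀ m ∈ Finset.range (n + 1),
        (n.choose m : ℂ) * z ^ m * (1 - z) ^ (n - m) * ((m : ℂ) / (n : ℂ)) ^ k
          = ∑ j ∈ Finset.range (k + 1),
              ((stir k j : ℂ) *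
                ((n.choose m : ℂ) * z ^ m * (1 - z) ^ (n - m) * (m.descFactorial j : ℂ)))
                / (n : ℂ) ^ k := by
      intro m _
      have hm : ((m : ℂ)) ^ k
          = ∑ j ∈ Finset.range (k + 1), (stir k j : ℂ) * (m.descFactorial j : ℂ) := by
        exact_mod_cast congrArg (Nat.cast (R := ℂ)) (pow_eq_sum_stir m k)
      rw [div_pow, hm, Finset.sum_div, Finset.mul_sum]
      refine Finset.sum_congr rfl fun j _ => ?_
      ring
    rw [Finset.sum_congr rfl hterm, Finset.sum_comm, Finset.sum_div]
    refine Finset.sum_congr rfl fun j _ => ?_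
    rw [← Finset.sum_div, ← Finset.mul_sum, sum_bern_descFactorial n j z]
  -- Step B: expression for the error
  have hE : bernC n (fun w => w ^ k) z - z ^ k
      = (∑ j ∈ Finset.range k, (stir k j : ℂ) * ((n.descFactorial j : ℂ) * z ^ j)
          + ((n.descFactorial k : ℂ) - (n : ℂ) ^ k) * z ^ k) / (n : ℂ) ^ k := by
    rw [hA, Finset.sum_range_succ, stir_self, Nat.cast_one, one_mul]
    field_simp
    ring
  rw [hE, norm_div, norm_pow, Complex.norm_natCast]
  set D : ℝ := ((n ^ k - n.descFactorial k : ℕ) : ℝ) with hD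
  have hD0 : 0 ≤ D := Nat.cast_nonneg _
  have hdesc_le : n.descFactorial k ≤ n ^ k := Nat.descFactorial_le_pow n k
  -- sum of lower Stirling terms
  have hsum_nat : ∑ j ∈ Finset.range k, stir k j * n.descFactorial j
      = n ^ k - n.descFactorial k := by
    have h := pow_eq_sum_stir n k
    rw [Finset.sum_range_succ, stir_self, one_mul] at h
    omega
  -- bound the numerator
  have hnum : ‖∑ j ∈ Finset.range k, (stir k j : ℂ) * ((n.descFactorial j : ℂ) * z ^ j)
      + ((n.descFactorial k : ℂ) - (n : ℂ) ^ k) * z ^ k‖ ≤ D * (r ^ (k - 1) + r ^ k) := by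
    refine le_trans (norm_add_le _ _) ?_
    have h1 : ‖∑ j ∈ Finset.range k, (stir k j : ℂ) * ((n.descFactorial j : ℂ) * z ^ j)‖
        ≤ D * r ^ (k - 1) := by
      refine le_trans (norm_sum_le _ _) ?_
      have hterm : ∀ j ∈ Finset.range k,
          ‖(stir k j : ℂ) * ((n.descFactorial j : ℂ) * z ^ j)‖
            ≤ ((stir k j * n.descFactorial j : ℕ) : ℝ) * r ^ (k - 1) := by
        intro j hj
        have hjk : j ≤ k - 1 := by simp only [Finset.mem_range] at hj; omega
        rw [norm_mul, norm_mul, norm_pow, Complex.norm_natCast, Complex.norm_natCast]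
        push_cast
        have hz1 : ‖z‖ ^ j ≤ r ^ j := pow_le_pow_left₀ (norm_nonneg z) hz j
        have hz2 : r ^ j ≤ r ^ (k - 1) := pow_le_pow_right₀ hr hjk
        have : ‖z‖ ^ j ≤ r ^ (k - 1) := le_trans hz1 hz2
        have hnn : (0 : ℝ) ≤ (stir k j : ℝ) * (n.descFactorial j : ℝ) := by positivity
        calc (stir k j : ℝ) * ((n.descFactorial j : ℝ) * ‖z‖ ^ j)
            = ((stir k j : ℝ) * (n.descFactorial j : ℝ)) * ‖z‖ ^ j := by ring
          _ ≤ ((stir k j : ℝ) * (n.descFactorial j : ℝ)) * r ^ (k - 1) :=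
              mul_le_mul_of_nonneg_left this hnn
          _ = (stir k j : ℝ) * (n.descFactorial j : ℝ) * r ^ (k - 1) := by ring
      calc ∑ j ∈ Finset.range k, ‖(stir k j : ℂ) * ((n.descFactorial j : ℂ) * z ^ j)‖
          ≤ ∑ j ∈ Finset.range k, ((stir k j * n.descFactorial j : ℕ) : ℝ) * r ^ (k - 1) :=
            Finset.sum_le_sum hterm
        _ = ((∑ j ∈ Finset.range k, stir k j * n.descFactorial j : ℕ) : ℝ) * r ^ (k - 1) := by
            rw [← Finset.sum_mul]
            push_cast
            ring
        _ = D * r ^ (k - 1) := by rw [hsum_nat]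
    have h2 : ‖((n.descFactorial k : ℂ) - (n : ℂ) ^ k) * z ^ k‖ ≤ D * r ^ k := by
      have hcast : (n.descFactorial k : ℂ) - (n : ℂ) ^ k = -(((n ^ k - n.descFactorial k : ℕ) : ℂ)) := by
        push_cast [hdesc_le]
        ring
      rw [norm_mul, hcast, norm_neg, Complex.norm_natCast, norm_pow]
      exact mul_le_mul_of_nonneg_left (pow_le_pow_left₀ (norm_nonneg z) hz k) hD0
    rw [mul_add]
    exact add_le_add h1 h2
  have hpk : (0 : ℝ) < (n : ℝ) ^ k := pow_pos hn0 k
  have step1 : ‖∑ j ∈ Finset.range k, (stir k j : ℂ) * ((n.descFactorial j : ℂ) * z ^ j)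
      + ((n.descFactorial k : ℂ) - (n : ℂ) ^ k) * z ^ k‖ / (n : ℝ) ^ k
      ≤ D * (r ^ (k - 1) + r ^ k) / (n : ℝ) ^ k := by gcongr
  refine le_trans step1 ?_
  rcases lt_or_ge k 2 with hk2 | hk2
  · have hDz : D = 0 := by
      rw [hD]
      interval_cases k <;> simp
    rw [hDz]
    interval_cases k <;> norm_num
  · obtain ⟨m, rfl⟩ : ∃ m, k = m + 2 := ⟨k - 2, by omega⟩
    have hL2 := pow_sub_descFactorial_le n (m + 2)
    have hcoef : (m + 2) * ((m + 2) - 1) = (m + 2) * (m + 1) := rfl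
    rw [hcoef] at hL2
    have hS : r ^ (m + 1) + r ^ (m + 2) ≤ 3 * r * (1 + r) * r ^ m := by
      have ht : 0 < r ^ m := pow_pos hr0 m
      rw [pow_succ, pow_succ, pow_succ]
      nlinarith [mul_pos ht hr0, mul_pos (mul_pos ht hr0) hr0]
    have h2n : (0 : ℝ) < 2 * (n : ℝ) := by positivity
    have key : D * (r ^ (m + 1) + r ^ (m + 2)) * (2 * (n : ℝ))
        ≤ 3 * r * (1 + r) * (((m : ℝ) + 2) * ((m : ℝ) + 1)) * r ^ m * (n : ℝ) ^ (m + 2) := by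
      have hSpos : (0 : ℝ) ≤ r ^ (m + 1) + r ^ (m + 2) := by positivity
      calc D * (r ^ (m + 1) + r ^ (m + 2)) * (2 * (n : ℝ))
          = (2 * (n : ℝ) * D) * (r ^ (m + 1) + r ^ (m + 2)) := by ring
        _ ≤ ((((m + 2) * (m + 1) : ℕ)) : ℝ) * (n : ℝ) ^ (m + 2) * (r ^ (m + 1) + r ^ (m + 2)) :=
            mul_le_mul_of_nonneg_right hL2 hSpos
        _ ≤ ((((m + 2) * (m + 1) : ℕ)) : ℝ) * (n : ℝ) ^ (m + 2) * (3 * r * (1 + r) * r ^ m) :=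
            mul_le_mul_of_nonneg_left hS (by positivity)
        _ = 3 * r * (1 + r) * (((m : ℝ) + 2) * ((m : ℝ) + 1)) * r ^ m * (n : ℝ) ^ (m + 2) := by
            push_cast
            ring
    have e1 : m + 2 - 1 = m + 1 := rfl
    have e2 : m + 2 - 2 = m := rfl
    rw [e1, e2]
    calc D * (r ^ (m + 1) + r ^ (m + 2)) / (n : ℝ) ^ (m + 2)
        ≤ (3 * r * (1 + r) * (((m : ℝ) + 2) * ((m : ℝ) + 1)) * r ^ m) / (2 * (n : ℝ)) := by
          rw [div_le_div_iff₀ hpk h2n]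
          linarith [key]
      _ = 3 * r * (1 + r) / (2 * (n : ℝ)) * (((m + 2 : ℕ) : ℝ) * (((m + 2 : ℕ) : ℝ) - 1)) * r ^ m := by
          push_cast
          ring
end

section
/- Assuming the bounds $|B_n(e_k)(z)|\le r^k$ and $|B_n(e_k)(z)-z^k|\le \frac{3r(1+r)}{2n}k(k-1)r^{k-2}$ for all $k$ and $|z|\le r$ with $r\ge 1$, it follows that for all $0\le j\le m$, $n\ge 1$, and $|z|\le r$: $|B_n(e_m)(z)-B_n(e_j)(z)B_n(e_{m-j})(z)|\le \frac{6(1+r)}{n} m^2 r^{m-1}$. -/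
open Complex

lemma cast_mul_sub_one_nonneg (k : ℕ) : 0 ≤ (k:ℝ) * ((k:ℝ) - 1) := by
  rcases Nat.eq_zero_or_pos k with h | h
  · simp [h]
  · have : (1:ℝ) ≤ (k:ℝ) := by exact_mod_cast h
    nlinarith

set_option maxHeartbeats 1600000 in
theorem bernsteinC_monomial_product_bound (r : ℝ) (hr : 1 ≤ r) (n : ℕ) (hn : 1 ≤ n)
    (hbd : ∀ k : ℕ, ∀ z : ℂ, ‖z‖ ≤ r → ‖bernC n (fun w => w ^ k) z‖ ≤ r ^ k)
    (happrox : ∀ k : ℕ, ∀ z : ℂ, ‖z‖ ≤ r →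
      ‖bernC n (fun w => w ^ k) z - z ^ k‖ ≤
        3 * r * (1 + r) / (2 * n) * ((k : ℝ) * ((k : ℝ) - 1)) * r ^ (k - 2))
    (m j : ℕ) (hj : j ≤ m) (z : ℂ) (hz : ‖z‖ ≤ r) :
    ‖bernC n (fun w => w ^ m) z -
        bernC n (fun w => w ^ j) z * bernC n (fun w => w ^ (m - j)) z‖ ≤
      6 * (1 + r) / n * (m : ℝ) ^ 2 * r ^ (m - 1) := by
  have hr0 : (0:ℝ) < r := lt_of_lt_of_le one_pos hr
  have hn0 : (0:ℝ) < n := by exact_mod_cast Nat.pos_of_ne_zero (by omega)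
  set C : ℝ := 3 * r * (1 + r) / (2 * n) with hCdef
  have hC0 : 0 ≤ C := by positivity
  set Bm := bernC n (fun w => w ^ m) z with hBm
  set Bj := bernC n (fun w => w ^ j) z with hBj
  set Bk := bernC n (fun w => w ^ (m - j)) z with hBk
  have h1 : ‖Bm - z ^ m‖ ≤ C * ((m:ℝ) * ((m:ℝ) - 1)) * r ^ (m - 2) := happrox m z hz
  have h2 : ‖z ^ j - Bj‖ ≤ C * ((j:ℝ) * ((j:ℝ) - 1)) * r ^ (j - 2) := by
    rw [norm_sub_rev]; exact happrox j z hz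
  have h3 : ‖z ^ (m - j) - Bk‖ ≤
      C * (((m - j : ℕ):ℝ) * (((m - j : ℕ):ℝ) - 1)) * r ^ (m - j - 2) := by
    rw [norm_sub_rev]; exact happrox (m - j) z hz
  have h4 : ‖Bj‖ ≤ r ^ j := hbd j z hz
  have hzj : ‖z ^ (m - j)‖ ≤ r ^ (m - j) := by
    rw [norm_pow]; exact pow_le_pow_left₀ (norm_nonneg z) hz _
  have hsplit : Bm - Bj * Bk
      = (Bm - z ^ m) + (z ^ j - Bj) * z ^ (m - j) + Bj * (z ^ (m - j) - Bk) := by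
    have : z ^ m = z ^ j * z ^ (m - j) := by
      rw [← pow_add, Nat.add_sub_cancel' hj]
    rw [this]; ring
  have htri : ‖Bm - Bj * Bk‖ ≤
      ‖Bm - z ^ m‖ + ‖z ^ j - Bj‖ * ‖z ^ (m - j)‖ + ‖Bj‖ * ‖z ^ (m - j) - Bk‖ := by
    rw [hsplit]
    refine le_trans (norm_add_le _ _) ?_
    have := norm_add_le (Bm - z ^ m) ((z ^ j - Bj) * z ^ (m - j))
    have hm1 := norm_mul_le (z ^ j - Bj) (z ^ (m - j))
    have hm2 := norm_mul_le Bj (z ^ (m - j) - Bk)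
    linarith
  have hT1 : ‖Bm - z ^ m‖ + ‖z ^ j - Bj‖ * ‖z ^ (m - j)‖ + ‖Bj‖ * ‖z ^ (m - j) - Bk‖ ≤
      C * ((m:ℝ) * ((m:ℝ) - 1)) * r ^ (m - 2)
      + (C * ((j:ℝ) * ((j:ℝ) - 1)) * r ^ (j - 2)) * r ^ (m - j)
      + r ^ j * (C * (((m - j : ℕ):ℝ) * (((m - j : ℕ):ℝ) - 1)) * r ^ (m - j - 2)) := by
    have e2 : ‖z ^ j - Bj‖ * ‖z ^ (m - j)‖
        ≤ (C * ((j:ℝ) * ((j:ℝ) - 1)) * r ^ (j - 2)) * r ^ (m - j) :=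
      mul_le_mul h2 hzj (norm_nonneg _)
        (by have := cast_mul_sub_one_nonneg j; positivity)
    have e3 : ‖Bj‖ * ‖z ^ (m - j) - Bk‖
        ≤ r ^ j * (C * (((m - j : ℕ):ℝ) * (((m - j : ℕ):ℝ) - 1)) * r ^ (m - j - 2)) :=
      mul_le_mul h4 h3 (norm_nonneg _) (by positivity)
    linarith
  refine le_trans htri (le_trans hT1 ?_)
  rcases Nat.lt_or_ge m 2 with hm | hm
  · interval_cases m <;> interval_cases j <;> norm_num <;> positivity
  · have hrm2 : (0:ℝ) < r ^ (m - 2) := by positivity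
    have hmm : (m:ℝ) * ((m:ℝ) - 1) ≤ (m:ℝ) ^ 2 := by
      nlinarith [Nat.cast_nonneg (α := ℝ) m]
    have hb1 : C * ((m:ℝ) * ((m:ℝ) - 1)) * r ^ (m - 2) ≤ C * (m:ℝ) ^ 2 * r ^ (m - 2) := by
      gcongr
    have hb2 : (C * ((j:ℝ) * ((j:ℝ) - 1)) * r ^ (j - 2)) * r ^ (m - j)
        ≤ C * (m:ℝ) ^ 2 * r ^ (m - 2) := by
      rcases Nat.lt_or_ge j 2 with hj2 | hj2
      · have hz' : ((j:ℝ) * ((j:ℝ) - 1)) = 0 := by interval_cases j <;> norm_num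
        rw [hz']
        have : (0:ℝ) ≤ C * (m:ℝ) ^ 2 * r ^ (m - 2) := by positivity
        simpa using this
      · have hpow : r ^ (j - 2) * r ^ (m - j) = r ^ (m - 2) := by
          rw [← pow_add]; congr 1; omega
        have hjm : (j:ℝ) * ((j:ℝ) - 1) ≤ (m:ℝ) ^ 2 := by
          have hle : (j:ℝ) ≤ (m:ℝ) := by exact_mod_cast hj
          nlinarith [Nat.cast_nonneg (α := ℝ) j]
        calc (C * ((j:ℝ) * ((j:ℝ) - 1)) * r ^ (j - 2)) * r ^ (m - j)
            = C * ((j:ℝ) * ((j:ℝ) - 1)) * (r ^ (j - 2) * r ^ (m - j)) := by ring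
          _ = C * ((j:ℝ) * ((j:ℝ) - 1)) * r ^ (m - 2) := by rw [hpow]
          _ ≤ C * (m:ℝ) ^ 2 * r ^ (m - 2) := by gcongr
    have hb3 : r ^ j * (C * (((m - j : ℕ):ℝ) * (((m - j : ℕ):ℝ) - 1)) * r ^ (m - j - 2))
        ≤ C * (m:ℝ) ^ 2 * r ^ (m - 2) := by
      rcases Nat.lt_or_ge (m - j) 2 with hk2 | hk2
      · have hz' : (((m - j:ℕ):ℝ) * (((m - j:ℕ):ℝ) - 1)) = 0 := by
          have : m - j = 0 ∨ m - j = 1 := by omega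
          rcases this with h | h <;> rw [h] <;> norm_num
        rw [hz']
        have : (0:ℝ) ≤ C * (m:ℝ) ^ 2 * r ^ (m - 2) := by positivity
        simpa using this
      · have hpow : r ^ j * r ^ (m - j - 2) = r ^ (m - 2) := by
          rw [← pow_add]; congr 1; omega
        have hjm : ((m - j:ℕ):ℝ) * (((m - j:ℕ):ℝ) - 1) ≤ (m:ℝ) ^ 2 := by
          have hle : ((m - j:ℕ):ℝ) ≤ (m:ℝ) := by exact_mod_cast Nat.sub_le m j
          nlinarith [Nat.cast_nonneg (α := ℝ) (m - j)]
        calc r ^ j * (C * (((m - j:ℕ):ℝ) * (((m - j:ℕ):ℝ) - 1)) * r ^ (m - j - 2))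
            = C * (((m - j:ℕ):ℝ) * (((m - j:ℕ):ℝ) - 1)) * (r ^ j * r ^ (m - j - 2)) := by ring
          _ = C * (((m - j:ℕ):ℝ) * (((m - j:ℕ):ℝ) - 1)) * r ^ (m - 2) := by rw [hpow]
          _ ≤ C * (m:ℝ) ^ 2 * r ^ (m - 2) := by gcongr
    have hc : 3 * C ≤ 6 * r * (1 + r) / n := by
      rw [hCdef, ← mul_div_assoc, div_le_div_iff₀ (by positivity) (by positivity)]
      nlinarith [mul_nonneg (mul_nonneg hr0.le (show (0:ℝ) ≤ 1 + r by linarith)) hn0.le]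
    have hfin : 3 * (C * (m:ℝ) ^ 2 * r ^ (m - 2))
        ≤ 6 * (1 + r) / n * (m:ℝ) ^ 2 * r ^ (m - 1) := by
      have hpow : r ^ (m - 1) = r * r ^ (m - 2) := by
        have h' : m - 1 = (m - 2) + 1 := by omega
        rw [h', pow_succ']
      rw [hpow]
      calc 3 * (C * (m:ℝ) ^ 2 * r ^ (m - 2))
          = (3 * C) * ((m:ℝ) ^ 2 * r ^ (m - 2)) := by ring
        _ ≤ (6 * r * (1 + r) / n) * ((m:ℝ) ^ 2 * r ^ (m - 2)) := by
            apply mul_le_mul_of_nonneg_right hc (by positivity)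
        _ = 6 * (1 + r) / n * (m:ℝ) ^ 2 * (r * r ^ (m - 2)) := by ring
    linarith [hb1, hb2, hb3, hfin]
end

section
/- Let $R>1$ and $f(z)=\sum_{k=0}^\infty a_k z^k$, $g(z)=\sum_{k=0}^\infty b_k z^k$ be analytic on $\{|z|<R\}$. Then for $1\le r<R$ and all $n\ge 1$, $\sup_{|z|\le r}|B_n(fg)(z)-B_n(f)(z)B_n(g)(z)|\le \frac{6(1+r)}{n}\sum_{m=0}^\infty m^2\big(\sum_{j=0}^m |a_j||b_{m-j}|\big) r^{m-1}$, and the series on the right is finite. -/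
open Complex

open Finset


-- binomial over powerset
lemma powerset_binom {α : Type*} [DecidableEq α] (u : Finset α) (x y : ℂ) :
    ∑ S ∈ u.powerset, x ^ S.card * y ^ (u.card - S.card) = (x + y) ^ u.card := by
  have h := Finset.prod_add (fun _ : α => x) (fun _ : α => y) u
  rw [Finset.prod_const] at h
  rw [h]
  apply Finset.sum_congr rfl
  intro S hS
  rw [Finset.mem_powerset] at hS
  rw [Finset.prod_const, Finset.prod_const, Finset.card_sdiff_of_subset hS]

-- sum over supersets of T
lemma sum_superset_weight {n : ℕ} (T : Finset (Fin n)) (z : ℂ) :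
    ∑ S ∈ (Finset.univ : Finset (Fin n)).powerset,
      (if T ⊆ S then z ^ S.card * (1 - z) ^ (n - S.card) else 0) = z ^ T.card := by
  rw [Finset.sum_ite, Finset.sum_const_zero, add_zero]
  have hbij : ∑ S ∈ ((Finset.univ : Finset (Fin n)).powerset.filter (T ⊆ ·)),
      z ^ S.card * (1 - z) ^ (n - S.card)
      = ∑ S' ∈ Tᶜ.powerset, z ^ (S'.card + T.card) * (1 - z) ^ (n - (S'.card + T.card)) := by
    apply Finset.sum_nbij' (fun S => S \ T) (fun S' => S' ∪ T)
    · intro S hS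
      simp only [Finset.mem_filter, Finset.mem_powerset] at hS
      simp only [Finset.mem_powerset]
      intro x hx
      simp only [Finset.mem_sdiff] at hx
      simp [Finset.mem_compl, hx.2]
    · intro S' hS'
      simp only [Finset.mem_powerset] at hS'
      simp only [Finset.mem_filter, Finset.mem_powerset]
      exact ⟨Finset.subset_univ _, Finset.subset_union_right⟩
    · intro S hS
      simp only [Finset.mem_filter, Finset.mem_powerset] at hS
      exact Finset.sdiff_union_of_subset hS.2
    · intro S' hS'
      simp only [Finset.mem_powerset] at hS'
      apply Finset.union_sdiff_cancel_right
      rw [Finset.disjoint_left]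
      intro x hx
      have := hS' hx
      simp only [Finset.mem_compl] at this
      exact this
    · intro S hS
      simp only [Finset.mem_filter, Finset.mem_powerset] at hS
      have hcard : (S \ T).card = S.card - T.card := Finset.card_sdiff_of_subset hS.2
      have hle : T.card ≤ S.card := Finset.card_le_card hS.2
      rw [hcard]
      congr 2 <;> omega
  rw [hbij]
  have : ∀ S' ∈ Tᶜ.powerset, z ^ (S'.card + T.card) * (1 - z) ^ (n - (S'.card + T.card))
      = z ^ T.card * (z ^ S'.card * (1 - z) ^ (Tᶜ.card - S'.card)) := by
    intro S' hS'
    simp only [Finset.mem_powerset] at hS'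
    have h1 : S'.card ≤ Tᶜ.card := Finset.card_le_card hS'
    have h2 : Tᶜ.card = n - T.card := by
      rw [Finset.card_compl, Fintype.card_fin]
    have h3 : T.card ≤ n := by
      have := Finset.card_le_card (Finset.subset_univ T)
      simpa using this
    have h4 : n - (S'.card + T.card) = Tᶜ.card - S'.card := by omega
    rw [pow_add, h4]
    ring
  rw [Finset.sum_congr rfl this, ← Finset.mul_sum, powerset_binom]
  simp

lemma prodIndicatorIte {n k : ℕ} (S : Finset (Fin n)) (φ : Fin k → Fin n) :
    (∏ t : Fin k, if φ t ∈ S then (1:ℂ) else 0) = if ∀ t, φ t ∈ S then 1 else 0 := by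
  by_cases h : ∀ t, φ t ∈ S
  · rw [if_pos h]
    exact Finset.prod_eq_one fun t _ => if_pos (h t)
  · push_neg at h
    obtain ⟨t, ht⟩ := h
    rw [if_neg (fun hall => ht (hall t))]
    exact Finset.prod_eq_zero (Finset.mem_univ t) (if_neg ht)

lemma card_pow {n : ℕ} (S : Finset (Fin n)) (k : ℕ) :
    (S.card : ℂ) ^ k = ∑ φ : Fin k → Fin n, if ∀ t, φ t ∈ S then (1:ℂ) else 0 := by
  have h1 : (S.card : ℂ) = ∑ i ∈ (Finset.univ : Finset (Fin n)), if i ∈ S then (1:ℂ) else 0 := by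
    simp [Finset.sum_ite_mem]
  rw [h1, Finset.sum_pow', Fintype.piFinset_univ]
  exact Finset.sum_congr rfl fun φ _ => prodIndicatorIte S φ

lemma bern_monomial (n k : ℕ) (z : ℂ) :
    bernC n (fun w => w ^ k) z
      = (∑ φ : Fin k → Fin n, z ^ (Finset.image φ Finset.univ).card) / (n : ℂ) ^ k := by
  have hstep1 : bernC n (fun w => w ^ k) z
      = ∑ S ∈ (Finset.univ : Finset (Fin n)).powerset,
          z ^ S.card * (1 - z) ^ (n - S.card) * ((S.card : ℂ) ^ k / (n : ℂ) ^ k) := by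
    rw [Finset.sum_powerset_apply_card
      (f := fun m => z ^ m * (1 - z) ^ (n - m) * ((m : ℂ) ^ k / (n : ℂ) ^ k))]
    unfold bernC
    rw [Finset.card_univ, Fintype.card_fin]
    apply Finset.sum_congr rfl
    intro i _
    simp only [nsmul_eq_mul, div_pow]
    ring
  have key : ∑ S ∈ (Finset.univ : Finset (Fin n)).powerset,
      z ^ S.card * (1 - z) ^ (n - S.card) * (S.card : ℂ) ^ k
      = ∑ φ : Fin k → Fin n, z ^ (Finset.image φ Finset.univ).card := by
    have h2 : ∀ S : Finset (Fin n), z ^ S.card * (1 - z) ^ (n - S.card) * (S.card : ℂ) ^ k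
        = ∑ φ : Fin k → Fin n,
            (if ∀ t, φ t ∈ S then z ^ S.card * (1 - z) ^ (n - S.card) else 0) := by
      intro S
      rw [card_pow, Finset.mul_sum]
      exact Finset.sum_congr rfl fun φ _ => by split <;> simp
    simp_rw [h2]
    rw [Finset.sum_comm]
    apply Finset.sum_congr rfl
    intro φ _
    have hcond : ∀ S : Finset (Fin n), (∀ t, φ t ∈ S) ↔ Finset.image φ Finset.univ ⊆ S := by
      intro S; rw [Finset.image_subset_iff]; simp
    calc ∑ S ∈ (Finset.univ : Finset (Fin n)).powerset,
          (if ∀ t, φ t ∈ S then z ^ S.card * (1 - z) ^ (n - S.card) else 0)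
        = ∑ S ∈ (Finset.univ : Finset (Fin n)).powerset,
          (if Finset.image φ Finset.univ ⊆ S then z ^ S.card * (1 - z) ^ (n - S.card) else 0) := by
          exact Finset.sum_congr rfl fun S _ => by rw [if_congr (hcond S) rfl rfl]
      _ = z ^ (Finset.image φ Finset.univ).card := sum_superset_weight _ z
  rw [hstep1, ← key, Finset.sum_div]
  exact Finset.sum_congr rfl fun S _ => by rw [mul_div_assoc]

lemma image_card_le {n k : ℕ} (φ : Fin k → Fin n) : (Finset.image φ Finset.univ).card ≤ k := by
  refine le_trans Finset.card_image_le ?_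
  simp

lemma bern_monomial_norm_le {n : ℕ} (hn : 1 ≤ n) (k : ℕ) {r : ℝ} (hr : 1 ≤ r) {z : ℂ}
    (hz : ‖z‖ ≤ r) : ‖bernC n (fun w => w ^ k) z‖ ≤ r ^ k := by
  have hnpos : (0:ℝ) < (n:ℝ) ^ k := by positivity
  rw [bern_monomial, norm_div]
  have hnn : ‖((n:ℂ)) ^ k‖ = (n:ℝ) ^ k := by
    rw [norm_pow]; simp
  rw [hnn, div_le_iff₀ hnpos]
  calc ‖∑ φ : Fin k → Fin n, z ^ (Finset.image φ Finset.univ).card‖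
      ≤ ∑ φ : Fin k → Fin n, ‖z ^ (Finset.image φ Finset.univ).card‖ := norm_sum_le _ _
    _ ≤ ∑ _φ : Fin k → Fin n, r ^ k := by
        apply Finset.sum_le_sum
        intro φ _
        rw [norm_pow]
        calc ‖z‖ ^ (Finset.image φ Finset.univ).card
            ≤ r ^ (Finset.image φ Finset.univ).card := by
              exact pow_le_pow_left₀ (norm_nonneg z) hz _
          _ ≤ r ^ k := pow_le_pow_right₀ hr (image_card_le φ)
    _ = r ^ k * (n:ℝ) ^ k := by
        simp [Finset.card_univ, Fintype.card_fun, mul_comm]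

lemma count_eval {nn j : ℕ} (t : Fin j) (v : Fin nn) :
    ∑ φ : Fin j → Fin nn, (if φ t = v then (1:ℝ) else 0) = (nn:ℝ) ^ (j - 1) := by
  have h1 : ∀ φ : Fin j → Fin nn, (if φ t = v then (1:ℝ) else 0)
      = ∏ i : Fin j, (if i = t then (if φ i = v then (1:ℝ) else 0) else 1) := by
    intro φ
    rw [Finset.prod_ite_eq' Finset.univ t (fun i => if φ i = v then (1:ℝ) else 0)]
    simp
  simp_rw [h1]
  rw [← Fintype.piFinset_univ,
    Finset.sum_prod_piFinset (Finset.univ : Finset (Fin nn))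
      (fun i w => if i = t then (if w = v then (1:ℝ) else 0) else 1)]
  have h2 : ∀ i : Fin j, (∑ w : Fin nn, if i = t then (if w = v then (1:ℝ) else 0) else 1)
      = if i = t then 1 else (nn:ℝ) := by
    intro i
    by_cases hit : i = t
    · simp [hit, Finset.sum_ite_eq']
    · simp [hit]
  rw [Finset.prod_congr rfl (fun i _ => h2 i)]
  rw [← Finset.mul_prod_erase _ _ (Finset.mem_univ t), if_pos rfl, one_mul]
  rw [Finset.prod_congr rfl
    (fun i hi => if_neg (Finset.ne_of_mem_erase hi))]
  rw [Finset.prod_const, Finset.card_erase_of_mem (Finset.mem_univ t), Finset.card_univ,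
    Fintype.card_fin]

lemma bern_prod_estimate {n : ℕ} (hn : 1 ≤ n) (k j : ℕ) {r : ℝ} (hr : 1 ≤ r) {z : ℂ}
    (hz : ‖z‖ ≤ r) :
    ‖bernC n (fun w => w ^ (k + j)) z
      - bernC n (fun w => w ^ k) z * bernC n (fun w => w ^ j) z‖
    ≤ 2 * k * j * r ^ (k + j) / n := by
  have hnpos : (0:ℝ) < (n:ℝ) := by exact_mod_cast hn
  have hr0 : (0:ℝ) ≤ r := le_trans zero_le_one hr
  set E : ((Fin k → Fin n) × (Fin j → Fin n)) ≃ (Fin (k + j) → Fin n) :=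
    (Equiv.sumArrowEquivProdArrow (Fin k) (Fin j) (Fin n)).symm.trans
      (Equiv.arrowCongr finSumFinEquiv (Equiv.refl (Fin n))) with hE
  have hEapp : ∀ (p : (Fin k → Fin n) × (Fin j → Fin n)) (i : Fin (k + j)),
      E p i = Sum.elim p.1 p.2 (finSumFinEquiv.symm i) := fun p i => rfl
  have himage : ∀ p : (Fin k → Fin n) × (Fin j → Fin n),
      Finset.image (E p) Finset.univ
        = Finset.image p.1 Finset.univ ∪ Finset.image p.2 Finset.univ := by
    intro p
    ext v
    simp only [Finset.mem_image, Finset.mem_union, Finset.mem_univ, true_and]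
    constructor
    · rintro ⟨i, hi⟩
      rw [hEapp] at hi
      rcases hx : finSumFinEquiv.symm i with s | s
      · left; exact ⟨s, by rw [hx] at hi; exact hi⟩
      · right; exact ⟨s, by rw [hx] at hi; exact hi⟩
    · rintro (⟨s, hs⟩ | ⟨s, hs⟩)
      · exact ⟨finSumFinEquiv (Sum.inl s), by rw [hEapp]; simp [hs]⟩
      · exact ⟨finSumFinEquiv (Sum.inr s), by rw [hEapp]; simp [hs]⟩
  have hU : bernC n (fun w => w ^ (k + j)) z
      = (∑ p : (Fin k → Fin n) × (Fin j → Fin n),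
          z ^ (Finset.image p.1 Finset.univ ∪ Finset.image p.2 Finset.univ).card)
        / (n : ℂ) ^ (k + j) := by
    rw [bern_monomial]
    congr 1
    rw [← Equiv.sum_comp E (fun φ => z ^ (Finset.image φ Finset.univ).card)]
    exact Finset.sum_congr rfl fun p _ => by rw [himage p]
  have hV : bernC n (fun w => w ^ k) z * bernC n (fun w => w ^ j) z
      = (∑ p : (Fin k → Fin n) × (Fin j → Fin n),
          z ^ (Finset.image p.1 Finset.univ).card * z ^ (Finset.image p.2 Finset.univ).card)
        / (n : ℂ) ^ (k + j) := by
    rw [bern_monomial, bern_monomial, div_mul_div_comm, ← pow_add]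
    congr 1
    rw [Finset.sum_mul_sum, Fintype.sum_prod_type]
  rw [hU, hV, div_sub_div_same, norm_div]
  have hnormpow : ‖((n:ℂ)) ^ (k + j)‖ = (n:ℝ) ^ (k + j) := by rw [norm_pow]; simp
  rw [hnormpow, ← Finset.sum_sub_distrib]
  have hpt : ∀ p : (Fin k → Fin n) × (Fin j → Fin n),
      ‖z ^ (Finset.image p.1 Finset.univ ∪ Finset.image p.2 Finset.univ).card
        - z ^ (Finset.image p.1 Finset.univ).card * z ^ (Finset.image p.2 Finset.univ).card‖
      ≤ ∑ s : Fin k, ∑ t : Fin j, (if p.1 s = p.2 t then 2 * r ^ (k + j) else 0) := by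
    intro p
    by_cases hx : ∃ (s : Fin k) (t : Fin j), p.1 s = p.2 t
    · obtain ⟨s, t, hst⟩ := hx
      have hterm : (0:ℝ) ≤ 2 * r ^ (k + j) := by positivity
      have hb : ∀ m : ℕ, m ≤ k + j → ‖z ^ m‖ ≤ r ^ (k + j) := by
        intro m hm
        rw [norm_pow]
        calc ‖z‖ ^ m ≤ r ^ m := pow_le_pow_left₀ (norm_nonneg z) hz m
          _ ≤ r ^ (k + j) := pow_le_pow_right₀ hr hm
      have hcu : (Finset.image p.1 Finset.univ ∪ Finset.image p.2 Finset.univ).card ≤ k + j := by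
        calc (Finset.image p.1 Finset.univ ∪ Finset.image p.2 Finset.univ).card
            ≤ (Finset.image p.1 Finset.univ).card + (Finset.image p.2 Finset.univ).card :=
              Finset.card_union_le _ _
          _ ≤ k + j := add_le_add (image_card_le _) (image_card_le _)
      have hLHS : ‖z ^ (Finset.image p.1 Finset.univ ∪ Finset.image p.2 Finset.univ).card
          - z ^ (Finset.image p.1 Finset.univ).card * z ^ (Finset.image p.2 Finset.univ).card‖
          ≤ 2 * r ^ (k + j) := by
        calc _ ≤ ‖z ^ (Finset.image p.1 Finset.univ ∪ Finset.image p.2 Finset.univ).card‖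
              + ‖z ^ (Finset.image p.1 Finset.univ).card * z ^ (Finset.image p.2 Finset.univ).card‖ :=
            norm_sub_le _ _
          _ ≤ r ^ (k + j) + r ^ (k + j) := by
              apply add_le_add (hb _ hcu)
              rw [← pow_add]
              exact hb _ (add_le_add (image_card_le _) (image_card_le _))
          _ = 2 * r ^ (k + j) := by ring
      refine le_trans hLHS ?_
      have hst' : (if p.1 s = p.2 t then 2 * r ^ (k + j) else (0:ℝ)) = 2 * r ^ (k + j) :=
        if_pos hst
      calc (2:ℝ) * r ^ (k + j)
          = (if p.1 s = p.2 t then 2 * r ^ (k + j) else (0:ℝ)) := hst'.symm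
        _ ≤ ∑ t : Fin j, (if p.1 s = p.2 t then 2 * r ^ (k + j) else 0) := by
            apply Finset.single_le_sum (f := fun t => if p.1 s = p.2 t then 2 * r ^ (k+j) else (0:ℝ))
              (fun t _ => by positivity) (Finset.mem_univ t)
        _ ≤ ∑ s : Fin k, ∑ t : Fin j, (if p.1 s = p.2 t then 2 * r ^ (k + j) else 0) := by
            apply Finset.single_le_sum
              (f := fun s => ∑ t : Fin j, if p.1 s = p.2 t then 2 * r ^ (k+j) else (0:ℝ))
              (fun s _ => Finset.sum_nonneg fun t _ => by positivity) (Finset.mem_univ s)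
    · push_neg at hx
      have hdisj : Disjoint (Finset.image p.1 Finset.univ) (Finset.image p.2 Finset.univ) := by
        rw [Finset.disjoint_left]
        intro v h1 h2
        rw [Finset.mem_image] at h1 h2
        obtain ⟨s, _, hs⟩ := h1
        obtain ⟨t, _, ht⟩ := h2
        exact hx s t (hs.trans ht.symm)
      rw [Finset.card_union_of_disjoint hdisj, pow_add, sub_self, norm_zero]
      exact Finset.sum_nonneg fun s _ => Finset.sum_nonneg fun t _ => by positivity
  have hcount : ∀ (s : Fin k) (t : Fin j),
      ∑ p : (Fin k → Fin n) × (Fin j → Fin n), (if p.1 s = p.2 t then 2 * r ^ (k + j) else (0:ℝ))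
      = 2 * r ^ (k + j) * ((n:ℝ) ^ k * (n:ℝ) ^ (j - 1)) := by
    intro s t
    rw [Fintype.sum_prod_type]
    have hinner : ∀ φ1 : Fin k → Fin n,
        ∑ φ2 : Fin j → Fin n, (if φ1 s = φ2 t then 2 * r ^ (k + j) else (0:ℝ))
        = 2 * r ^ (k + j) * (n:ℝ) ^ (j - 1) := by
      intro φ1
      have : ∀ φ2 : Fin j → Fin n, (if φ1 s = φ2 t then 2 * r ^ (k + j) else (0:ℝ))
          = 2 * r ^ (k + j) * (if φ2 t = φ1 s then (1:ℝ) else 0) := by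
        intro φ2
        by_cases h : φ1 s = φ2 t
        · rw [if_pos h, if_pos h.symm, mul_one]
        · rw [if_neg h, if_neg (fun h' => h h'.symm), mul_zero]
      rw [Finset.sum_congr rfl fun φ2 _ => this φ2, ← Finset.mul_sum, count_eval]
    rw [Finset.sum_congr rfl fun φ1 _ => hinner φ1, Finset.sum_const, Finset.card_univ,
      Fintype.card_fun, Fintype.card_fin, Fintype.card_fin, nsmul_eq_mul]
    push_cast
    ring
  have hbound : ‖∑ p : (Fin k → Fin n) × (Fin j → Fin n),
      (z ^ (Finset.image p.1 Finset.univ ∪ Finset.image p.2 Finset.univ).card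
        - z ^ (Finset.image p.1 Finset.univ).card * z ^ (Finset.image p.2 Finset.univ).card)‖
      ≤ (k:ℝ) * ((j:ℝ) * (2 * r ^ (k + j) * ((n:ℝ) ^ k * (n:ℝ) ^ (j - 1)))) := by
    calc _ ≤ ∑ p : (Fin k → Fin n) × (Fin j → Fin n),
          ‖z ^ (Finset.image p.1 Finset.univ ∪ Finset.image p.2 Finset.univ).card
            - z ^ (Finset.image p.1 Finset.univ).card * z ^ (Finset.image p.2 Finset.univ).card‖ :=
        norm_sum_le _ _
      _ ≤ ∑ p : (Fin k → Fin n) × (Fin j → Fin n),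
          ∑ s : Fin k, ∑ t : Fin j, (if p.1 s = p.2 t then 2 * r ^ (k + j) else 0) :=
        Finset.sum_le_sum fun p _ => hpt p
      _ = ∑ s : Fin k, ∑ p : (Fin k → Fin n) × (Fin j → Fin n),
          ∑ t : Fin j, (if p.1 s = p.2 t then 2 * r ^ (k + j) else 0) := Finset.sum_comm
      _ = ∑ s : Fin k, ∑ t : Fin j, ∑ p : (Fin k → Fin n) × (Fin j → Fin n),
          (if p.1 s = p.2 t then 2 * r ^ (k + j) else 0) := by
        exact Finset.sum_congr rfl fun s _ => Finset.sum_comm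
      _ = ∑ s : Fin k, ∑ t : Fin j, 2 * r ^ (k + j) * ((n:ℝ) ^ k * (n:ℝ) ^ (j - 1)) := by
        exact Finset.sum_congr rfl fun s _ => Finset.sum_congr rfl fun t _ => hcount s t
      _ = (k:ℝ) * ((j:ℝ) * (2 * r ^ (k + j) * ((n:ℝ) ^ k * (n:ℝ) ^ (j - 1)))) := by
        rw [Finset.sum_const, Finset.sum_const]
        simp [Finset.card_univ, mul_assoc]
  have harith : ((k:ℝ) * ((j:ℝ) * (2 * r ^ (k + j) * ((n:ℝ) ^ k * (n:ℝ) ^ (j - 1)))))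
      / (n:ℝ) ^ (k + j) ≤ 2 * k * j * r ^ (k + j) / n := by
    rcases Nat.eq_zero_or_pos k with hk | hk
    · subst hk; simp
    rcases Nat.eq_zero_or_pos j with hj | hj
    · subst hj; simp
    have hpow : (n:ℝ) ^ k * (n:ℝ) ^ (j - 1) = (n:ℝ) ^ (k + j - 1) := by
      rw [← pow_add]
      congr 1
      omega
    have hsplit : (n:ℝ) ^ (k + j) = (n:ℝ) ^ (k + j - 1) * n := by
      rw [← pow_succ]
      congr 1
      omega
    rw [hpow, hsplit]
    rw [div_le_div_iff₀ (by positivity) (by positivity)]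
    have hnp : (0:ℝ) < (n:ℝ) ^ (k + j - 1) := by positivity
    nlinarith [hnp, hr0, pow_nonneg hr0 (k+j), sq_nonneg ((n:ℝ)^(k+j-1))]
  calc ‖∑ p : (Fin k → Fin n) × (Fin j → Fin n),
        (z ^ (Finset.image p.1 Finset.univ ∪ Finset.image p.2 Finset.univ).card
          - z ^ (Finset.image p.1 Finset.univ).card * z ^ (Finset.image p.2 Finset.univ).card)‖
        / (n:ℝ) ^ (k + j)
      ≤ ((k:ℝ) * ((j:ℝ) * (2 * r ^ (k + j) * ((n:ℝ) ^ k * (n:ℝ) ^ (j - 1)))))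
        / (n:ℝ) ^ (k + j) := by gcongr
    _ ≤ 2 * k * j * r ^ (k + j) / n := harith

open Filter in
lemma summable_norm_coeff {Rr : ℝ} {a : ℕ → ℂ} {F : ℂ → ℂ}
    (hf : ∀ z : ℂ, ‖z‖ < Rr → HasSum (fun k => a k * z ^ k) (F z))
    {ρ t : ℝ} (hρ : 0 < ρ) (hρR : ρ < Rr) (ht : 0 ≤ t) (htρ : t < ρ) :
    Summable (fun k => ‖a k‖ * t ^ k) := by
  have hρn : ‖((ρ:ℂ))‖ < Rr := by
    rw [Complex.norm_real, Real.norm_eq_abs, abs_of_pos hρ]; exact hρR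
  have h1 : Summable (fun k => a k * (ρ:ℂ) ^ k) := (hf (ρ:ℂ) hρn).summable
  have h3 : Tendsto (fun k => ‖a k * (ρ:ℂ) ^ k‖) atTop (nhds 0) := by
    simpa using (h1.tendsto_atTop_zero).norm
  obtain ⟨C, hC⟩ := h3.bddAbove_range
  have hC' : ∀ k, ‖a k‖ * ρ ^ k ≤ C := by
    intro k
    have := hC (Set.mem_range_self k)
    simpa [norm_mul, norm_pow, Complex.norm_real, Real.norm_eq_abs, abs_of_pos hρ] using this
  have hq0 : (0:ℝ) ≤ t / ρ := div_nonneg ht hρ.le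
  have hq1 : t / ρ < 1 := (div_lt_one hρ).mpr htρ
  have hgeo : Summable (fun k => C * (t / ρ) ^ k) :=
    (summable_geometric_of_lt_one hq0 hq1).mul_left C
  apply Summable.of_nonneg_of_le (fun k => by positivity) _ hgeo
  intro k
  have hkey : ‖a k‖ * t ^ k = (‖a k‖ * ρ ^ k) * (t / ρ) ^ k := by
    rw [div_pow]
    field_simp
  rw [hkey]
  exact mul_le_mul_of_nonneg_right (hC' k) (by positivity)

lemma hasSum_bern {Rr : ℝ} (hRr : 1 < Rr) {F : ℂ → ℂ} {a : ℕ → ℂ}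
    (hf : ∀ z : ℂ, ‖z‖ < Rr → HasSum (fun k => a k * z ^ k) (F z))
    (n : ℕ) (hn : 1 ≤ n) (z : ℂ) :
    HasSum (fun k => a k * bernC n (fun w => w ^ k) z) (bernC n F z) := by
  have hnpos : (0:ℝ) < (n:ℝ) := by exact_mod_cast hn
  have hpt : ∀ i ∈ Finset.range (n + 1), HasSum
      (fun k => (n.choose i : ℂ) * z ^ i * (1 - z) ^ (n - i) * (a k * ((i:ℂ) / n) ^ k))
      ((n.choose i : ℂ) * z ^ i * (1 - z) ^ (n - i) * F ((i:ℂ) / n)) := by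
    intro i hi
    apply HasSum.mul_left
    apply hf
    have hnorm : ‖((i:ℂ) / (n:ℂ))‖ = (i:ℝ) / (n:ℝ) := by
      rw [norm_div]
      simp
    rw [hnorm]
    have hin : (i:ℝ) ≤ (n:ℝ) := by
      exact_mod_cast Nat.lt_succ_iff.mp (Finset.mem_range.mp hi)
    calc (i:ℝ) / (n:ℝ) ≤ 1 := by rw [div_le_one hnpos]; exact hin
      _ < Rr := hRr
  have h := hasSum_sum hpt
  have hfun : (fun k => ∑ i ∈ Finset.range (n + 1),
      (n.choose i : ℂ) * z ^ i * (1 - z) ^ (n - i) * (a k * ((i:ℂ) / n) ^ k))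
      = fun k => a k * bernC n (fun w => w ^ k) z := by
    funext k
    unfold bernC
    rw [Finset.mul_sum]
    exact Finset.sum_congr rfl fun i _ => by ring
  have hval : ∑ i ∈ Finset.range (n + 1),
      (n.choose i : ℂ) * z ^ i * (1 - z) ^ (n - i) * F ((i:ℂ) / n) = bernC n F z := rfl
  rw [hfun, hval] at h
  exact h

lemma hasSum_cauchy_pt {Rr : ℝ} (hRr : 1 < Rr) {F G : ℂ → ℂ} {a b : ℕ → ℂ}
    (hf : ∀ z : ℂ, ‖z‖ < Rr → HasSum (fun k => a k * z ^ k) (F z))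
    (hg : ∀ z : ℂ, ‖z‖ < Rr → HasSum (fun k => b k * z ^ k) (G z))
    (w : ℂ) (hw : ‖w‖ < Rr) :
    HasSum (fun m => (∑ j ∈ Finset.range (m + 1), a j * b (m - j)) * w ^ m) (F w * G w) := by
  set ρ := (‖w‖ + Rr) / 2 with hρdef
  have hn0 : (0:ℝ) ≤ ‖w‖ := norm_nonneg w
  have hρ : 0 < ρ := by rw [hρdef]; linarith
  have hwρ : ‖w‖ < ρ := by rw [hρdef]; linarith
  have hρR : ρ < Rr := by rw [hρdef]; linarith
  have hA : Summable (fun k => ‖a k * w ^ k‖) := by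
    have := summable_norm_coeff hf hρ hρR hn0 hwρ
    simpa [norm_mul, norm_pow] using this
  have hB : Summable (fun k => ‖b k * w ^ k‖) := by
    have := summable_norm_coeff hg hρ hρR hn0 hwρ
    simpa [norm_mul, norm_pow] using this
  have h := hasSum_sum_range_mul_of_summable_norm hA hB
  rw [(hf w hw).tsum_eq, (hg w hw).tsum_eq] at h
  have hfun : (fun m => ∑ k ∈ Finset.range (m + 1), (a k * w ^ k) * (b (m - k) * w ^ (m - k)))
      = fun m => (∑ j ∈ Finset.range (m + 1), a j * b (m - j)) * w ^ m := by
    funext m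
    rw [Finset.sum_mul]
    apply Finset.sum_congr rfl
    intro k hk
    have hk' : k ≤ m := Nat.lt_succ_iff.mp (Finset.mem_range.mp hk)
    have hww : w ^ m = w ^ k * w ^ (m - k) := by rw [← pow_add, Nat.add_sub_cancel' hk']
    rw [hww]
    ring
  rw [hfun] at h
  exact h

theorem bernsteinC_gruss_estimate (R r : ℝ) (hR : 1 < R) (hr : 1 ≤ r) (hrR : r < R)
    (f g : ℂ → ℂ) (a b : ℕ → ℂ)
    (hf : ∀ z : ℂ, ‖z‖ < R → HasSum (fun k => a k * z ^ k) (f z))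
    (hg : ∀ z : ℂ, ‖z‖ < R → HasSum (fun k => b k * z ^ k) (g z))
    (n : ℕ) (hn : 1 ≤ n) :
    Summable (fun m : ℕ =>
        (m : ℝ) ^ 2 * (∑ j ∈ Finset.range (m + 1), ‖a j‖ * ‖b (m - j)‖) * r ^ (m - 1)) ∧
    ∀ z : ℂ, ‖z‖ ≤ r →
      ‖bernC n (fun w => f w * g w) z - bernC n f z * bernC n g z‖ ≤
        6 * (1 + r) / n * ∑' m : ℕ,
          (m : ℝ) ^ 2 * (∑ j ∈ Finset.range (m + 1), ‖a j‖ * ‖b (m - j)‖) * r ^ (m - 1) := by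
  have hr0 : (0:ℝ) ≤ r := le_trans zero_le_one hr
  have hnpos : (0:ℝ) < (n:ℝ) := by exact_mod_cast hn
  set ρ := (r + R) / 2 with hρdef
  have hρpos : 0 < ρ := by rw [hρdef]; linarith
  have hrρ : r < ρ := by rw [hρdef]; linarith
  have hρR : ρ < R := by rw [hρdef]; linarith
  set ρ' := (ρ + R) / 2 with hρ'def
  have hρ'pos : 0 < ρ' := by rw [hρ'def]; linarith
  have hρρ' : ρ < ρ' := by rw [hρ'def]; linarith
  have hρ'R : ρ' < R := by rw [hρ'def]; linarith
  have hsaρ : Summable (fun k => ‖a k‖ * ρ ^ k) :=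
    summable_norm_coeff hf hρ'pos hρ'R hρpos.le hρρ'
  have hsbρ : Summable (fun k => ‖b k‖ * ρ ^ k) :=
    summable_norm_coeff hg hρ'pos hρ'R hρpos.le hρρ'
  obtain ⟨Ca, hCa⟩ : ∃ C, ∀ k, ‖a k‖ * ρ ^ k ≤ C := by
    obtain ⟨C, hC⟩ := (hsaρ.tendsto_atTop_zero).bddAbove_range
    exact ⟨C, fun k => hC (Set.mem_range_self k)⟩
  obtain ⟨Cb, hCb⟩ : ∃ C, ∀ k, ‖b k‖ * ρ ^ k ≤ C := by
    obtain ⟨C, hC⟩ := (hsbρ.tendsto_atTop_zero).bddAbove_range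
    exact ⟨C, fun k => hC (Set.mem_range_self k)⟩
  have hCa0 : 0 ≤ Ca := le_trans (by positivity) (hCa 0)
  have hCb0 : 0 ≤ Cb := le_trans (by positivity) (hCb 0)
  set q := r / ρ with hqdef
  have hq0 : 0 ≤ q := by rw [hqdef]; positivity
  have hq1 : q < 1 := by rw [hqdef]; exact (div_lt_one hρpos).mpr hrρ
  clear_value ρ ρ' q
  have hab : ∀ m : ℕ, (∑ j ∈ Finset.range (m + 1), ‖a j‖ * ‖b (m - j)‖)
      ≤ ((m:ℝ) + 1) * (Ca * Cb / ρ ^ m) := by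
    intro m
    have hterm : ∀ j ∈ Finset.range (m + 1), ‖a j‖ * ‖b (m - j)‖ ≤ Ca * Cb / ρ ^ m := by
      intro j hj
      have hj' : j ≤ m := Nat.lt_succ_iff.mp (Finset.mem_range.mp hj)
      have h1 : ‖a j‖ ≤ Ca / ρ ^ j := (le_div_iff₀ (by positivity)).mpr (hCa j)
      have h2 : ‖b (m - j)‖ ≤ Cb / ρ ^ (m - j) := (le_div_iff₀ (by positivity)).mpr (hCb (m - j))
      calc ‖a j‖ * ‖b (m - j)‖ ≤ (Ca / ρ ^ j) * (Cb / ρ ^ (m - j)) :=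
            mul_le_mul h1 h2 (norm_nonneg _) (by positivity)
        _ = Ca * Cb / ρ ^ m := by
            rw [div_mul_div_comm, ← pow_add, Nat.add_sub_cancel' hj']
    calc (∑ j ∈ Finset.range (m + 1), ‖a j‖ * ‖b (m - j)‖)
        ≤ ∑ _j ∈ Finset.range (m + 1), Ca * Cb / ρ ^ m := Finset.sum_le_sum hterm
      _ = ((m:ℝ) + 1) * (Ca * Cb / ρ ^ m) := by
          rw [Finset.sum_const, Finset.card_range, nsmul_eq_mul]
          push_cast
          ring
  have part1 : Summable (fun m : ℕ =>
      (m : ℝ) ^ 2 * (∑ j ∈ Finset.range (m + 1), ‖a j‖ * ‖b (m - j)‖) * r ^ (m - 1)) := by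
    have hqn : ‖q‖ < 1 := by rw [Real.norm_eq_abs, _root_.abs_of_nonneg hq0]; exact hq1
    have h3 : Summable (fun m : ℕ => (m:ℝ) ^ 3 * q ^ m) :=
      summable_pow_mul_geometric_of_norm_lt_one 3 hqn
    have h2 : Summable (fun m : ℕ => (m:ℝ) ^ 2 * q ^ m) :=
      summable_pow_mul_geometric_of_norm_lt_one 2 hqn
    have hmaj : Summable (fun m : ℕ => Ca * Cb * (((m:ℝ) ^ 3 + (m:ℝ) ^ 2) * q ^ m)) := by
      have := (h3.add h2).mul_left (Ca * Cb)
      apply this.congr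
      intro m
      ring
    apply Summable.of_nonneg_of_le (fun m => by positivity) _ hmaj
    intro m
    have hrm : r ^ (m - 1) ≤ r ^ m := pow_le_pow_right₀ hr (Nat.sub_le m 1)
    have hS0 : (0:ℝ) ≤ ∑ j ∈ Finset.range (m + 1), ‖a j‖ * ‖b (m - j)‖ :=
      Finset.sum_nonneg fun j _ => mul_nonneg (norm_nonneg _) (norm_nonneg _)
    calc (m : ℝ) ^ 2 * (∑ j ∈ Finset.range (m + 1), ‖a j‖ * ‖b (m - j)‖) * r ^ (m - 1)
        ≤ (m : ℝ) ^ 2 * (((m:ℝ) + 1) * (Ca * Cb / ρ ^ m)) * r ^ m := by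
          apply mul_le_mul
          · exact mul_le_mul_of_nonneg_left (hab m) (by positivity)
          · exact hrm
          · positivity
          · positivity
      _ = Ca * Cb * (((m:ℝ) ^ 3 + (m:ℝ) ^ 2) * q ^ m) := by
          rw [hqdef, div_pow]
          field_simp
  refine ⟨part1, ?_⟩
  intro z hz
  have hBnorm : ∀ k : ℕ, ‖bernC n (fun w => w ^ k) z‖ ≤ r ^ k :=
    fun k => bern_monomial_norm_le hn k hr hz
  have hsf : HasSum (fun k => a k * bernC n (fun w => w ^ k) z) (bernC n f z) :=
    hasSum_bern hR hf n hn z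
  have hsg : HasSum (fun k => b k * bernC n (fun w => w ^ k) z) (bernC n g z) :=
    hasSum_bern hR hg n hn z
  have hsfg : HasSum (fun m => (∑ j ∈ Finset.range (m + 1), a j * b (m - j)) *
      bernC n (fun w => w ^ m) z) (bernC n (fun w => f w * g w) z) :=
    hasSum_bern hR (fun w hw => hasSum_cauchy_pt hR hf hg w hw) n hn z
  have hsar : Summable (fun k => ‖a k‖ * r ^ k) :=
    summable_norm_coeff hf hρpos hρR hr0 hrρ
  have hsbr : Summable (fun k => ‖b k‖ * r ^ k) :=
    summable_norm_coeff hg hρpos hρR hr0 hrρ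
  have hA' : Summable (fun k => ‖a k * bernC n (fun w => w ^ k) z‖) := by
    apply Summable.of_nonneg_of_le (fun k => norm_nonneg _) _ hsar
    intro k
    rw [norm_mul]
    exact mul_le_mul_of_nonneg_left (hBnorm k) (norm_nonneg _)
  have hB' : Summable (fun k => ‖b k * bernC n (fun w => w ^ k) z‖) := by
    apply Summable.of_nonneg_of_le (fun k => norm_nonneg _) _ hsbr
    intro k
    rw [norm_mul]
    exact mul_le_mul_of_nonneg_left (hBnorm k) (norm_nonneg _)
  have hsprod := hasSum_sum_range_mul_of_summable_norm hA' hB'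
  rw [hsf.tsum_eq, hsg.tsum_eq] at hsprod
  have hd := hsfg.sub hsprod
  have hterm : (fun m => (∑ j ∈ Finset.range (m + 1), a j * b (m - j)) *
        bernC n (fun w => w ^ m) z
      - ∑ k ∈ Finset.range (m + 1), (a k * bernC n (fun w => w ^ k) z) *
          (b (m - k) * bernC n (fun w => w ^ (m - k)) z))
      = fun m => ∑ k ∈ Finset.range (m + 1), a k * b (m - k) *
          (bernC n (fun w => w ^ m) z
            - bernC n (fun w => w ^ k) z * bernC n (fun w => w ^ (m - k)) z) := by
    funext m
    rw [Finset.sum_mul, ← Finset.sum_sub_distrib]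
    exact Finset.sum_congr rfl fun k _ => by ring
  rw [hterm] at hd
  have hBdiff : ∀ m : ℕ, ∀ k ∈ Finset.range (m + 1),
      ‖bernC n (fun w => w ^ m) z
        - bernC n (fun w => w ^ k) z * bernC n (fun w => w ^ (m - k)) z‖
      ≤ 6 * (1 + r) / n * ((m:ℝ) ^ 2 * r ^ (m - 1)) := by
    intro m k hk
    have hk' : k ≤ m := Nat.lt_succ_iff.mp (Finset.mem_range.mp hk)
    have hm : k + (m - k) = m := Nat.add_sub_cancel' hk'
    have h := bern_prod_estimate hn k (m - k) hr hz
    rw [hm] at h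
    refine h.trans ?_
    rcases Nat.eq_zero_or_pos m with h0 | hm1
    · subst h0
      have hk0 : k = 0 := Nat.le_zero.mp hk'
      subst hk0
      simp
    · have hrsplit : r ^ m ≤ (1 + r) * r ^ (m - 1) := by
        have hx : r ^ m = r * r ^ (m - 1) := by
          rw [← pow_succ']
          congr 1
          omega
        rw [hx]
        apply mul_le_mul_of_nonneg_right (by linarith) (by positivity)
      have hkm : (k:ℝ) * ((m - k : ℕ):ℝ) ≤ (m:ℝ) ^ 2 := by
        have h1 : (k:ℝ) ≤ (m:ℝ) := by exact_mod_cast hk'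
        have h2 : ((m - k : ℕ):ℝ) ≤ (m:ℝ) := by exact_mod_cast Nat.sub_le m k
        have hk0 : (0:ℝ) ≤ (k:ℝ) := Nat.cast_nonneg k
        have h20 : (0:ℝ) ≤ ((m - k : ℕ):ℝ) := Nat.cast_nonneg _
        nlinarith
      have hkey : (k:ℝ) * ((m - k : ℕ):ℝ) * r ^ m ≤ (m:ℝ) ^ 2 * ((1 + r) * r ^ (m - 1)) := by
        apply mul_le_mul hkm hrsplit (by positivity)
        positivity
      rw [show 6 * (1 + r) / (n:ℝ) * ((m:ℝ) ^ 2 * r ^ (m - 1))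
        = 6 * ((m:ℝ) ^ 2 * ((1 + r) * r ^ (m - 1))) / n from by ring]
      apply div_le_div_of_nonneg_right _ hnpos.le
      nlinarith [hkey, mul_nonneg (mul_nonneg (sq_nonneg (m:ℝ))
        (by positivity : (0:ℝ) ≤ 1 + r)) (pow_nonneg hr0 (m-1))]
  have hnorm_d : ∀ m : ℕ, ‖∑ k ∈ Finset.range (m + 1), a k * b (m - k) *
        (bernC n (fun w => w ^ m) z
          - bernC n (fun w => w ^ k) z * bernC n (fun w => w ^ (m - k)) z)‖
      ≤ 6 * (1 + r) / n * ((m : ℝ) ^ 2 *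
          (∑ j ∈ Finset.range (m + 1), ‖a j‖ * ‖b (m - j)‖) * r ^ (m - 1)) := by
    intro m
    calc ‖∑ k ∈ Finset.range (m + 1), a k * b (m - k) *
          (bernC n (fun w => w ^ m) z
            - bernC n (fun w => w ^ k) z * bernC n (fun w => w ^ (m - k)) z)‖
        ≤ ∑ k ∈ Finset.range (m + 1), ‖a k * b (m - k) *
          (bernC n (fun w => w ^ m) z
            - bernC n (fun w => w ^ k) z * bernC n (fun w => w ^ (m - k)) z)‖ :=
          norm_sum_le _ _
      _ ≤ ∑ k ∈ Finset.range (m + 1), ‖a k‖ * ‖b (m - k)‖ *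
          (6 * (1 + r) / n * ((m:ℝ) ^ 2 * r ^ (m - 1))) := by
          apply Finset.sum_le_sum
          intro k hk
          rw [norm_mul, norm_mul]
          exact mul_le_mul_of_nonneg_left (hBdiff m k hk)
            (mul_nonneg (norm_nonneg _) (norm_nonneg _))
      _ = 6 * (1 + r) / n * ((m : ℝ) ^ 2 *
          (∑ j ∈ Finset.range (m + 1), ‖a j‖ * ‖b (m - j)‖) * r ^ (m - 1)) := by
          rw [← Finset.sum_mul]
          ring
  have husum : Summable (fun m : ℕ => 6 * (1 + r) / (n:ℝ) * ((m : ℝ) ^ 2 *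
      (∑ j ∈ Finset.range (m + 1), ‖a j‖ * ‖b (m - j)‖) * r ^ (m - 1))) :=
    part1.mul_left _
  have hds : Summable (fun m => ‖∑ k ∈ Finset.range (m + 1), a k * b (m - k) *
      (bernC n (fun w => w ^ m) z
        - bernC n (fun w => w ^ k) z * bernC n (fun w => w ^ (m - k)) z)‖) :=
    Summable.of_nonneg_of_le (fun m => norm_nonneg _) hnorm_d husum
  calc ‖bernC n (fun w => f w * g w) z - bernC n f z * bernC n g z‖
      = ‖∑' m, ∑ k ∈ Finset.range (m + 1), a k * b (m - k) *
        (bernC n (fun w => w ^ m) z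
          - bernC n (fun w => w ^ k) z * bernC n (fun w => w ^ (m - k)) z)‖ := by
        rw [hd.tsum_eq]
    _ ≤ ∑' m, ‖∑ k ∈ Finset.range (m + 1), a k * b (m - k) *
        (bernC n (fun w => w ^ m) z
          - bernC n (fun w => w ^ k) z * bernC n (fun w => w ^ (m - k)) z)‖ :=
        norm_tsum_le_tsum_norm hds
    _ ≤ ∑' m : ℕ, 6 * (1 + r) / (n:ℝ) * ((m : ℝ) ^ 2 *
        (∑ j ∈ Finset.range (m + 1), ‖a j‖ * ‖b (m - j)‖) * r ^ (m - 1)) :=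
        Summable.tsum_le_tsum hnorm_d hds husum
    _ = 6 * (1 + r) / n * ∑' m : ℕ,
        (m : ℝ) ^ 2 * (∑ j ∈ Finset.range (m + 1), ‖a j‖ * ‖b (m - j)‖) * r ^ (m - 1) :=
        tsum_mul_left
end

section
/- For the Pǎltǎnea operators $U_n^\rho$ with $\rho>0$, the second moment satisfies $U_n^\rho((e_1-x)^2)(x)=\frac{(\rho+1)x(1-x)}{n\rho+1}$ for all $x\in[0,1]$ and $n\ge 1$. -/
open Real

/-- Euler Beta function. -/
noncomputable def betaFn (x y : ℝ) : ℝ :=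
  ∫ t in (0 : ℝ)..1, t ^ (x - 1) * (1 - t) ^ (y - 1)

/-- Bernstein basis polynomial `p_{n,k}(x) = C(n,k) x^k (1-x)^{n-k}`. -/
noncomputable def p (n k : ℕ) (x : ℝ) : ℝ :=
  (n.choose k : ℝ) * x ^ k * (1 - x) ^ (n - k)

/-- The density `μ_{n,k}^ρ`. -/
noncomputable def muP (n k : ℕ) (ρ : ℝ) (t : ℝ) : ℝ :=
  t ^ ((k : ℝ) * ρ - 1) * (1 - t) ^ (((n : ℝ) - (k : ℝ)) * ρ - 1) /
    betaFn ((k : ℝ) * ρ) (((n : ℝ) - (k : ℝ)) * ρ)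

/-- The Pǎltǎnea operator `U_n^ρ`. -/
noncomputable def palt (n : ℕ) (ρ : ℝ) (f : ℝ → ℝ) (x : ℝ) : ℝ :=
  ∑ k ∈ Finset.Icc 1 (n - 1), (∫ t in (0 : ℝ)..1, f t * muP n k ρ t) * p n k x
    + f 0 * (1 - x) ^ n + f 1 * x ^ n


lemma betaFn_complex {a b : ℝ} (ha : 0 < a) (hb : 0 < b) :
    Complex.betaIntegral a b = (betaFn a b : ℂ) := by
  rw [Complex.betaIntegral, betaFn, ← intervalIntegral.integral_ofReal]
  apply intervalIntegral.integral_congr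
  intro t ht
  rw [Set.uIcc_of_le zero_le_one, Set.mem_Icc] at ht
  dsimp only
  rw [show ((a:ℂ) - 1) = ((a - 1 : ℝ) : ℂ) by push_cast; ring,
    show ((b:ℂ) - 1) = ((b - 1 : ℝ) : ℂ) by push_cast; ring,
    show (1 - (t:ℂ)) = ((1 - t : ℝ) : ℂ) by push_cast; ring,
    ← Complex.ofReal_cpow ht.1 (a-1), ← Complex.ofReal_cpow (by linarith [ht.2]) (b-1)]
  push_cast
  ring

lemma betaFn_eq {a b : ℝ} (ha : 0 < a) (hb : 0 < b) :
    betaFn a b = Real.Gamma a * Real.Gamma b / Real.Gamma (a + b) := by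
  have h := Complex.Gamma_mul_Gamma_eq_betaIntegral (s := (a : ℂ)) (t := (b : ℂ))
    (by simpa using ha) (by simpa using hb)
  rw [betaFn_complex ha hb, ← Complex.ofReal_add, Complex.Gamma_ofReal, Complex.Gamma_ofReal,
    Complex.Gamma_ofReal] at h
  have h2 : Real.Gamma a * Real.Gamma b = Real.Gamma (a + b) * betaFn a b := by
    exact_mod_cast h
  rw [h2]
  field_simp [(Real.Gamma_pos_of_pos (by linarith : (0:ℝ) < a + b)).ne']

lemma betaFn_pos {a b : ℝ} (ha : 0 < a) (hb : 0 < b) : 0 < betaFn a b := by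
  rw [betaFn_eq ha hb]
  exact div_pos (mul_pos (Real.Gamma_pos_of_pos ha) (Real.Gamma_pos_of_pos hb))
    (Real.Gamma_pos_of_pos (by linarith))

lemma realBeta_integrable {a b : ℝ} (ha : 0 < a) (hb : 0 < b) :
    IntervalIntegrable (fun t => t ^ (a - 1) * (1 - t) ^ (b - 1)) MeasureTheory.volume 0 1 := by
  have h := Complex.betaIntegral_convergent (u := (a : ℂ)) (v := (b : ℂ))
    (by simpa using ha) (by simpa using hb)
  rw [intervalIntegrable_iff] at h ⊢
  have h2 := h.re
  apply MeasureTheory.IntegrableOn.congr_fun h2 ?_ measurableSet_uIoc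
  intro t ht
  rw [Set.uIoc_of_le zero_le_one, Set.mem_Ioc] at ht
  dsimp only
  rw [show ((a:ℂ) - 1) = ((a - 1 : ℝ) : ℂ) by push_cast; ring,
    show ((b:ℂ) - 1) = ((b - 1 : ℝ) : ℂ) by push_cast; ring,
    show (1 - (t:ℂ)) = ((1 - t : ℝ) : ℂ) by push_cast; ring,
    ← Complex.ofReal_cpow ht.1.le (a-1), ← Complex.ofReal_cpow (by linarith [ht.2]) (b-1)]
  simp

lemma tpow (t : ℝ) (ht : 0 ≤ t) {c : ℝ} (hc : 0 < c) : t * t ^ (c - 1) = t ^ c := by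
  rcases eq_or_lt_of_le ht with h | h
  · simp [← h, Real.zero_rpow hc.ne']
  · rw [mul_comm, ← Real.rpow_add_one h.ne', sub_add_cancel]

lemma integral_sq_mul {a b : ℝ} (x : ℝ) (ha : 0 < a) (hb : 0 < b) :
    ∫ t in (0:ℝ)..1, (t - x) ^ 2 * (t ^ (a - 1) * (1 - t) ^ (b - 1)) =
      betaFn (a + 2) b - 2 * x * betaFn (a + 1) b + x ^ 2 * betaFn a b := by
  have I0 := realBeta_integrable ha hb
  have I1 := realBeta_integrable (a := a + 1) (by linarith) hb
  have I2 := realBeta_integrable (a := a + 2) (by linarith) hb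
  calc ∫ t in (0:ℝ)..1, (t - x) ^ 2 * (t ^ (a - 1) * (1 - t) ^ (b - 1))
      = ∫ t in (0:ℝ)..1, (t ^ (a + 2 - 1) * (1 - t) ^ (b - 1)
          - 2 * x * (t ^ (a + 1 - 1) * (1 - t) ^ (b - 1))
          + x ^ 2 * (t ^ (a - 1) * (1 - t) ^ (b - 1))) := by
        apply intervalIntegral.integral_congr
        intro t ht
        rw [Set.uIcc_of_le zero_le_one, Set.mem_Icc] at ht
        have e1 : t ^ (a + 1 - 1) = t * t ^ (a - 1) := by
          rw [add_sub_cancel_right, tpow t ht.1 ha]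
        have e2 : t ^ (a + 2 - 1) = t * (t * t ^ (a - 1)) := by
          rw [show a + 2 - 1 = (a + 1 + 1) - 1 by ring, add_sub_cancel_right,
            ← tpow t ht.1 (by linarith : (0:ℝ) < a + 1), add_sub_cancel_right,
            tpow t ht.1 ha]
        dsimp only
        rw [e1, e2]
        ring
    _ = betaFn (a + 2) b - 2 * x * betaFn (a + 1) b + x ^ 2 * betaFn a b := by
        rw [intervalIntegral.integral_add ((I2.sub (I1.const_mul (2 * x)))) (I0.const_mul (x ^ 2)),
          intervalIntegral.integral_sub I2 (I1.const_mul (2 * x)),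
          intervalIntegral.integral_const_mul, intervalIntegral.integral_const_mul,
          betaFn, betaFn, betaFn]

lemma betaFn_ratio1 {a b : ℝ} (ha : 0 < a) (hb : 0 < b) :
    betaFn (a + 1) b = a / (a + b) * betaFn a b := by
  have hab : (0:ℝ) < a + b := by linarith
  rw [betaFn_eq (by linarith) hb, betaFn_eq ha hb, show a + 1 + b = (a + b) + 1 by ring,
    Real.Gamma_add_one ha.ne', Real.Gamma_add_one hab.ne']
  have g1 := (Real.Gamma_pos_of_pos ha).ne'
  have g2 := (Real.Gamma_pos_of_pos hb).ne'
  have g3 := (Real.Gamma_pos_of_pos hab).ne'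
  field_simp

lemma betaFn_ratio2 {a b : ℝ} (ha : 0 < a) (hb : 0 < b) :
    betaFn (a + 2) b = a * (a + 1) / ((a + b) * (a + b + 1)) * betaFn a b := by
  rw [show a + 2 = (a + 1) + 1 by ring, betaFn_ratio1 (by linarith) hb, betaFn_ratio1 ha hb]
  have hab : (0:ℝ) < a + b := by linarith
  have h1 : a + 1 + b ≠ 0 := by linarith
  have h2 : a + b + 1 ≠ 0 := by linarith
  field_simp
  ring

lemma p_eval (n k : ℕ) (x : ℝ) : (bernsteinPolynomial ℝ n k).eval x = p n k x := by
  simp [bernsteinPolynomial, p]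

lemma bern0 (n : ℕ) (x : ℝ) : ∑ k ∈ Finset.range (n + 1), p n k x = 1 := by
  have h := congrArg (Polynomial.eval x) (bernsteinPolynomial.sum ℝ n)
  simpa [Polynomial.eval_finset_sum, p_eval] using h

lemma bern1 (n : ℕ) (x : ℝ) :
    ∑ k ∈ Finset.range (n + 1), (k : ℝ) * p n k x = n * x := by
  have h := congrArg (Polynomial.eval x) (bernsteinPolynomial.sum_smul ℝ n)
  simpa [Polynomial.eval_finset_sum, p_eval] using h

lemma bern2 (n : ℕ) (x : ℝ) :
    ∑ k ∈ Finset.range (n + 1), (k : ℝ) ^ 2 * p n k x = n * (n - 1) * x ^ 2 + n * x := by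
  have h := congrArg (Polynomial.eval x) (bernsteinPolynomial.sum_mul_smul ℝ n)
  simp only [Polynomial.eval_finset_sum, Polynomial.eval_smul, p_eval, smul_eq_mul,
    Polynomial.eval_mul, Polynomial.eval_pow, Polynomial.eval_X] at h
  simp only [nsmul_eq_mul, Nat.cast_mul] at h
  have e : ∀ k : ℕ, (k : ℝ) * ((k - 1 : ℕ) : ℝ) = (k : ℝ) ^ 2 - (k : ℝ) := by
    intro k
    rcases Nat.eq_zero_or_pos k with rfl | hk
    · simp
    · push_cast [Nat.cast_sub hk]
      ring
  simp only [e] at h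
  have h2 := h
  have h3 : ∑ k ∈ Finset.range (n + 1), ((k : ℝ) ^ 2 - (k : ℝ)) * p n k x
      = (∑ k ∈ Finset.range (n + 1), (k : ℝ) ^ 2 * p n k x)
        - ∑ k ∈ Finset.range (n + 1), (k : ℝ) * p n k x := by
    rw [← Finset.sum_sub_distrib]
    congr 1; ext k; ring
  rw [h3, bern1] at h2
  linear_combination h2

lemma moment_k (ρ x : ℝ) (hρ : 0 < ρ) (n k : ℕ) (hk1 : 1 ≤ k) (hk2 : k < n) :
    ∫ t in (0 : ℝ)..1, (t - x) ^ 2 * muP n k ρ t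
      = (ρ * (k : ℝ) ^ 2 + (k : ℝ)) / ((n : ℝ) * ((n : ℝ) * ρ + 1))
        - 2 * x * ((k : ℝ) / (n : ℝ)) + x ^ 2 := by
  set a : ℝ := (k : ℝ) * ρ with ha_def
  set b : ℝ := ((n : ℝ) - (k : ℝ)) * ρ with hb_def
  have hkn : (k : ℝ) < (n : ℝ) := by exact_mod_cast hk2
  have hk0 : (0:ℝ) < (k : ℝ) := by exact_mod_cast hk1
  have ha : 0 < a := by positivity
  have hb : 0 < b := by
    apply mul_pos (by linarith) hρ
  have hB := betaFn_pos ha hb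
  have hab : a + b = (n : ℝ) * ρ := by rw [ha_def, hb_def]; ring
  have : ∫ t in (0 : ℝ)..1, (t - x) ^ 2 * muP n k ρ t
      = (∫ t in (0 : ℝ)..1, (t - x) ^ 2 * (t ^ (a - 1) * (1 - t) ^ (b - 1))) / betaFn a b := by
    rw [← intervalIntegral.integral_div]
    apply intervalIntegral.integral_congr
    intro t _
    simp only [muP, ha_def, hb_def]
    ring
  rw [this, integral_sq_mul x ha hb, betaFn_ratio1 ha hb, betaFn_ratio2 ha hb, hab]
  have hn0 : (0:ℝ) < (n : ℝ) := lt_trans hk0 hkn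
  have hd1 : (n : ℝ) * ρ ≠ 0 := by positivity
  have hd2 : (n : ℝ) * ρ + 1 ≠ 0 := by positivity
  have hd3 : (n : ℝ) * ((n : ℝ) * ρ + 1) ≠ 0 := by positivity
  rw [ha_def]
  have hB2 : betaFn ((k:ℝ) * ρ) b ≠ 0 := hB.ne'
  field_simp

theorem paltanea_second_moment (ρ : ℝ) (hρ : 0 < ρ) (n : ℕ) (hn : 1 ≤ n)
    (x : ℝ) (hx : x ∈ Set.Icc (0 : ℝ) 1) :
    palt n ρ (fun t => (t - x) ^ 2) x = (ρ + 1) * x * (1 - x) / ((n : ℝ) * ρ + 1) := by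
  set g : ℕ → ℝ := fun k =>
    (ρ * (k : ℝ) ^ 2 + (k : ℝ)) / ((n : ℝ) * ((n : ℝ) * ρ + 1))
      - 2 * x * ((k : ℝ) / (n : ℝ)) + x ^ 2 with hg
  have hn0 : (0:ℝ) < (n : ℝ) := by exact_mod_cast hn
  have hd2 : (0:ℝ) < (n : ℝ) * ρ + 1 := by positivity
  -- rewrite the operator
  have hsum : palt n ρ (fun t => (t - x) ^ 2) x
      = ∑ k ∈ Finset.Icc 1 (n - 1), g k * p n k x + x ^ 2 * (1 - x) ^ n
        + (1 - x) ^ 2 * x ^ n := by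
    rw [palt]
    have h1 : ∑ k ∈ Finset.Icc 1 (n - 1), (∫ t in (0:ℝ)..1, (t - x) ^ 2 * muP n k ρ t) * p n k x
        = ∑ k ∈ Finset.Icc 1 (n - 1), g k * p n k x := by
      apply Finset.sum_congr rfl
      intro k hk
      rw [Finset.mem_Icc] at hk
      rw [moment_k ρ x hρ n k hk.1 (by omega)]
    rw [h1]
    norm_num
  rw [hsum]
  -- boundary terms
  have hg0 : g 0 * p n 0 x = x ^ 2 * (1 - x) ^ n := by
    simp [hg, p]
  have hgn : g n * p n n x = (1 - x) ^ 2 * x ^ n := by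
    have : g n = (1 - x) ^ 2 := by
      simp only [hg]
      field_simp
      ring
    rw [this, p, Nat.choose_self, Nat.sub_self]
    push_cast
    ring
  -- extend the sum to range (n+1)
  obtain ⟨m, rfl⟩ : ∃ m, n = m + 1 := ⟨n - 1, by omega⟩
  have hkey : ∑ k ∈ Finset.range (m + 1 + 1), g k * p (m + 1) k x
      = ∑ k ∈ Finset.Icc 1 m, g k * p (m + 1) k x
        + g 0 * p (m + 1) 0 x + g (m + 1) * p (m + 1) (m + 1) x := by
    rw [Finset.sum_range_succ, Finset.sum_range_succ']
    have : ∑ k ∈ Finset.Icc 1 m, g k * p (m + 1) k x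
        = ∑ i ∈ Finset.range m, g (i + 1) * p (m + 1) (i + 1) x := by
      rw [← Finset.Ico_add_one_right_eq_Icc, Finset.sum_Ico_eq_sum_range]
      simp [add_comm]
    rw [this]
  have hIcc : Finset.Icc 1 (m + 1 - 1) = Finset.Icc 1 m := by norm_num
  rw [hIcc, ← hg0, ← hgn, ← hkey]
  set N : ℝ := ((m + 1 : ℕ) : ℝ) with hN
  have expand : ∀ k ∈ Finset.range (m + 1 + 1), g k * p (m + 1) k x
      = (ρ / (N * (N * ρ + 1))) * ((k : ℝ) ^ 2 * p (m + 1) k x)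
        + (1 / (N * (N * ρ + 1)) - 2 * x / N) * ((k : ℝ) * p (m + 1) k x)
        + x ^ 2 * p (m + 1) k x := by
    intro k _
    simp only [hg, hN]
    ring
  rw [Finset.sum_congr rfl expand, Finset.sum_add_distrib, Finset.sum_add_distrib,
    ← Finset.mul_sum, ← Finset.mul_sum, ← Finset.mul_sum, bern2, bern1, bern0]
  rw [hN] at hn0 hd2 ⊢
  field_simp
  ring
end

section
/- Let $f,g$ be analytic on $\{|z|<R\}$ with $R>r\ge 1$. Assume the quantitative Voronovskaya bounds: there exist constants $C_1,C_2,C_3$ with $|B_n(h)(z)-h(z)-\frac{z(1-z)h''(z)}{2n}|\le \frac{C_h}{n^2}$ for $h\in\{fg,f,g\}$ and all $|z|\le r$, and approximation bounds $|B_n(h)(z)-h(z)|\le \frac{D_h}{n}$ for $h\in\{f,g\}$. Then there is $C=C(r,f,g)$ with $|B_n(fg)(z)-B_n(f)(z)B_n(g)(z)-\frac{z(1-z)f'(z)g'(z)}{n}|\le \frac{C}{n^2}$ for all $n\ge 1$ and $|z|\le r$. -/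
open Complex

lemma deriv2_mul_aux (R : ℝ) (f g : ℂ → ℂ)
    (hf : AnalyticOnNhd ℂ f (Metric.ball (0 : ℂ) R))
    (hg : AnalyticOnNhd ℂ g (Metric.ball (0 : ℂ) R))
    {z : ℂ} (hz : z ∈ Metric.ball (0 : ℂ) R) :
    deriv (deriv (fun w => f w * g w)) z =
      deriv (deriv f) z * g z + 2 * deriv f z * deriv g z + f z * deriv (deriv g) z := by
  have hev : (deriv (fun w => f w * g w)) =ᶠ[nhds z]
      (fun w => deriv f w * g w + f w * deriv g w) := by
    filter_upwards [Metric.isOpen_ball.mem_nhds hz] with w hw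
    exact deriv_mul (hf w hw).differentiableAt (hg w hw).differentiableAt
  rw [hev.deriv_eq]
  have hdf : DifferentiableAt ℂ (deriv f) z := ((hf.deriv) z hz).differentiableAt
  have hdg : DifferentiableAt ℂ (deriv g) z := ((hg.deriv) z hz).differentiableAt
  have hfz : DifferentiableAt ℂ f z := (hf z hz).differentiableAt
  have hgz : DifferentiableAt ℂ g z := (hg z hz).differentiableAt
  rw [deriv_fun_add (hdf.fun_mul hgz) (hfz.fun_mul hdg), deriv_fun_mul hdf hgz, deriv_fun_mul hfz hdg]
  ring

theorem bernsteinC_gruss_voronovskaya (R r : ℝ) (hr : 1 ≤ r) (hrR : r < R)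
    (f g : ℂ → ℂ)
    (hf : AnalyticOn ℂ f (Metric.ball (0 : ℂ) R))
    (hg : AnalyticOn ℂ g (Metric.ball (0 : ℂ) R))
    (C₁ C₂ C₃ D₁ D₂ : ℝ)
    (hvfg : ∀ n : ℕ, 1 ≤ n → ∀ z : ℂ, ‖z‖ ≤ r →
      ‖bernC n (fun w => f w * g w) z - f z * g z -
          z * (1 - z) * deriv (deriv (fun w => f w * g w)) z / (2 * n)‖ ≤ C₁ / (n : ℝ) ^ 2)
    (hvf : ∀ n : ℕ, 1 ≤ n → ∀ z : ℂ, ‖z‖ ≤ r →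
      ‖bernC n f z - f z - z * (1 - z) * deriv (deriv f) z / (2 * n)‖ ≤ C₂ / (n : ℝ) ^ 2)
    (hvg : ∀ n : ℕ, 1 ≤ n → ∀ z : ℂ, ‖z‖ ≤ r →
      ‖bernC n g z - g z - z * (1 - z) * deriv (deriv g) z / (2 * n)‖ ≤ C₃ / (n : ℝ) ^ 2)
    (haf : ∀ n : ℕ, 1 ≤ n → ∀ z : ℂ, ‖z‖ ≤ r → ‖bernC n f z - f z‖ ≤ D₁ / n)
    (hag : ∀ n : ℕ, 1 ≤ n → ∀ z : ℂ, ‖z‖ ≤ r → ‖bernC n g z - g z‖ ≤ D₂ / n) :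
    ∃ C : ℝ, ∀ n : ℕ, 1 ≤ n → ∀ z : ℂ, ‖z‖ ≤ r →
      ‖bernC n (fun w => f w * g w) z - bernC n f z * bernC n g z -
          z * (1 - z) * deriv f z * deriv g z / n‖ ≤ C / (n : ℝ) ^ 2 := by
  have hf' : AnalyticOnNhd ℂ f (Metric.ball (0 : ℂ) R) :=
    (Metric.isOpen_ball.analyticOn_iff_analyticOnNhd).1 hf
  have hg' : AnalyticOnNhd ℂ g (Metric.ball (0 : ℂ) R) :=
    (Metric.isOpen_ball.analyticOn_iff_analyticOnNhd).1 hg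
  have hsub : Metric.closedBall (0 : ℂ) r ⊆ Metric.ball (0 : ℂ) R :=
    Metric.closedBall_subset_ball hrR
  obtain ⟨Mf, hMf⟩ := (isCompact_closedBall (0 : ℂ) r).exists_bound_of_continuousOn
    ((hf'.continuousOn).mono hsub)
  obtain ⟨Mg, hMg⟩ := (isCompact_closedBall (0 : ℂ) r).exists_bound_of_continuousOn
    ((hg'.continuousOn).mono hsub)
  have hMf0 : 0 ≤ Mf := le_trans (norm_nonneg _) (hMf 0 (by simp [le_trans zero_le_one hr]))
  have hMg0 : 0 ≤ Mg := le_trans (norm_nonneg _) (hMg 0 (by simp [le_trans zero_le_one hr]))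
  refine ⟨C₁ + Mf * C₃ + Mg * C₂ + D₁ * D₂, ?_⟩
  intro n hn z hz
  have hzr : z ∈ Metric.closedBall (0 : ℂ) r := by
    simpa [Metric.mem_closedBall, dist_eq_norm] using hz
  have hzR : z ∈ Metric.ball (0 : ℂ) R := hsub hzr
  have hN : (n : ℂ) ≠ 0 := Nat.cast_ne_zero.2 (by omega)
  have hn2 : (0:ℝ) < (n : ℝ) ^ 2 := by positivity
  have hnr : (0:ℝ) < (n : ℝ) := by exact_mod_cast Nat.lt_of_lt_of_le Nat.zero_lt_one hn
  set A : ℂ := bernC n (fun w => f w * g w) z - f z * g z -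
      z * (1 - z) * deriv (deriv (fun w => f w * g w)) z / (2 * n) with hA
  set B : ℂ := bernC n g z - g z - z * (1 - z) * deriv (deriv g) z / (2 * n) with hB
  set Cc : ℂ := bernC n f z - f z - z * (1 - z) * deriv (deriv f) z / (2 * n) with hCc
  have key : bernC n (fun w => f w * g w) z - bernC n f z * bernC n g z -
      z * (1 - z) * deriv f z * deriv g z / n =
      A - f z * B - g z * Cc - (bernC n f z - f z) * (bernC n g z - g z) := by
    rw [hA, hB, hCc, deriv2_mul_aux R f g hf' hg' hzR]
    field_simp
    ring
  rw [key]
  have h1 : ‖A - f z * B - g z * Cc - (bernC n f z - f z) * (bernC n g z - g z)‖ ≤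
      ‖A‖ + ‖f z‖ * ‖B‖ + ‖g z‖ * ‖Cc‖ +
        ‖bernC n f z - f z‖ * ‖bernC n g z - g z‖ := by
    calc ‖A - f z * B - g z * Cc - (bernC n f z - f z) * (bernC n g z - g z)‖
        ≤ ‖A - f z * B - g z * Cc‖ + ‖(bernC n f z - f z) * (bernC n g z - g z)‖ :=
          norm_sub_le _ _
      _ ≤ ‖A - f z * B‖ + ‖g z * Cc‖ + ‖(bernC n f z - f z) * (bernC n g z - g z)‖ := by
          gcongr; exact norm_sub_le _ _
      _ ≤ ‖A‖ + ‖f z * B‖ + ‖g z * Cc‖ + ‖(bernC n f z - f z) * (bernC n g z - g z)‖ := by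
          gcongr; exact norm_sub_le _ _
      _ = _ := by rw [norm_mul, norm_mul, norm_mul]
  refine h1.trans ?_
  have hAb : ‖A‖ ≤ C₁ / (n : ℝ) ^ 2 := hvfg n hn z hz
  have hBb : ‖B‖ ≤ C₃ / (n : ℝ) ^ 2 := hvg n hn z hz
  have hCb : ‖Cc‖ ≤ C₂ / (n : ℝ) ^ 2 := hvf n hn z hz
  have hPb : ‖bernC n f z - f z‖ ≤ D₁ / n := haf n hn z hz
  have hQb : ‖bernC n g z - g z‖ ≤ D₂ / n := hag n hn z hz
  have hprod : ‖bernC n f z - f z‖ * ‖bernC n g z - g z‖ ≤ D₁ * D₂ / (n : ℝ) ^ 2 := by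
    have := mul_le_mul hPb hQb (norm_nonneg _) (le_trans (norm_nonneg _) hPb)
    calc ‖bernC n f z - f z‖ * ‖bernC n g z - g z‖ ≤ (D₁ / n) * (D₂ / n) := this
      _ = D₁ * D₂ / (n : ℝ) ^ 2 := by rw [div_mul_div_comm, ← sq]
  have h2 : ‖f z‖ * ‖B‖ ≤ Mf * (C₃ / (n : ℝ) ^ 2) :=
    mul_le_mul (hMf z hzr) hBb (norm_nonneg _) hMf0
  have h3 : ‖g z‖ * ‖Cc‖ ≤ Mg * (C₂ / (n : ℝ) ^ 2) :=
    mul_le_mul (hMg z hzr) hCb (norm_nonneg _) hMg0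
  have : ‖A‖ + ‖f z‖ * ‖B‖ + ‖g z‖ * ‖Cc‖ + ‖bernC n f z - f z‖ * ‖bernC n g z - g z‖
      ≤ C₁ / (n : ℝ) ^ 2 + Mf * (C₃ / (n : ℝ) ^ 2) + Mg * (C₂ / (n : ℝ) ^ 2)
        + D₁ * D₂ / (n : ℝ) ^ 2 := by
    gcongr
  refine this.trans (le_of_eq ?_)
  field_simp
end
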